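/- arXiv:1610.06836 — 3 statements merged into one kernel-verified Lean document; each statement's English description precedes it below -/
import Mathlib

section
/- Assume (B2) holds. If (q, b) ∈ ℝ × H₀(Δ,Ω) with b ≠ 0 is a solution of the Dirichlet Biharmonic Steklov eigenproblem ∫_Ω Δb Δv dx = q ∫_{∂Ω} (D_ν b)(D_ν v) dσ for all v ∈ H₀(Δ,Ω), then q > 0; that is, all DBS eigenvalues are strictly positive. -/
open MeasureTheory Filter Set Topology
open scoped ENNReal

noncomputable section

/-- Euclidean `N`-space. -/
abbrev Euc (N : ℕ) : Type := EuclideanSpace ℝ (Fin N)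

variable {N : ℕ}


/-- The real inner (dot) product on `Euc N`. -/
def rip {N : ℕ} (a b : Euc N) : ℝ := inner ℝ a b

/-- Lebesgue measure restricted to `Ω`. -/
def volΩ (Ω : Set (Euc N)) : Measure (Euc N) := volume.restrict Ω

/-- The surface measure `σ` on the boundary of `Ω`:
`(N-1)`-dimensional Hausdorff measure restricted to `∂Ω = frontier Ω`. -/
def surf (Ω : Set (Euc N)) : Measure (Euc N) :=
  (μH[(N : ℝ) - 1]).restrict (frontier Ω)

/-- Smooth test functions with compact support contained in `Ω` (the class `C_c^∞(Ω)`). -/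
def IsTestFun (Ω : Set (Euc N)) (φ : Euc N → ℝ) : Prop :=
  ContDiff ℝ (⊤ : ℕ∞) φ ∧ HasCompactSupport φ ∧ tsupport φ ⊆ Ω

/-- The class `C_c²(Ω)` of twice continuously differentiable functions with
compact support contained in `Ω`. -/
def IsCc2Fun (Ω : Set (Euc N)) (φ : Euc N → ℝ) : Prop :=
  ContDiff ℝ 2 φ ∧ HasCompactSupport φ ∧ tsupport φ ⊆ Ω

/-- The `i`-th (classical) partial derivative. -/
def pder (φ : Euc N → ℝ) (i : Fin N) (x : Euc N) : ℝ :=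
  fderiv ℝ φ x (EuclideanSpace.single i 1)

/-- The classical gradient, as a vector in `Euc N`. -/
def clGrad (φ : Euc N → ℝ) (x : Euc N) : Euc N :=
  (WithLp.equiv 2 (Fin N → ℝ)).symm (fun i => pder φ i x)

/-- The classical Laplacian `Δφ = ∑ ∂²φ/∂xᵢ²`. -/
def clLap (φ : Euc N → ℝ) (x : Euc N) : ℝ :=
  ∑ i, pder (pder φ i) i x

/-- `G` is the weak gradient of `u` on `Ω`. -/
def HasWeakGrad (Ω : Set (Euc N)) (u : Euc N → ℝ) (G : Euc N → Euc N) : Prop :=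
  ∀ φ, IsTestFun Ω φ → ∀ i : Fin N,
    ∫ x in Ω, u x * pder φ i x = - ∫ x in Ω, G x i * φ x

/-- `w` is the weak divergence of the vector field `G` on `Ω`. -/
def HasWeakDiv (Ω : Set (Euc N)) (G : Euc N → Euc N) (w : Euc N → ℝ) : Prop :=
  ∀ φ, IsTestFun Ω φ →
    ∫ x in Ω, (∑ i, G x i * pder φ i x) = - ∫ x in Ω, w x * φ x

/-- An element of the Sobolev space `H¹(Ω)`: an `L²` function together with an
`L²` weak gradient. -/
structure H1Fun (Ω : Set (Euc N)) where
  u : Euc N → ℝ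
  grad : Euc N → Euc N
  u_mem : MemLp u 2 (volΩ Ω)
  grad_mem : MemLp grad 2 (volΩ Ω)
  weak_grad : HasWeakGrad Ω u grad

/-- Membership in `H¹₀(Ω)`: `f` is an `H¹`-limit of test functions. -/
def IsH10 {Ω : Set (Euc N)} (f : H1Fun Ω) : Prop :=
  ∃ φ : ℕ → Euc N → ℝ, (∀ n, IsTestFun Ω (φ n)) ∧
    Tendsto (fun n =>
      eLpNorm (fun x => f.u x - φ n x) 2 (volΩ Ω) +
      eLpNorm (fun x => f.grad x - clGrad (φ n) x) 2 (volΩ Ω)) atTop (𝓝 0)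

/-- An `H¹` function is harmonic on `Ω` iff `∫ ∇u·∇v = 0` for all `v ∈ H¹₀(Ω)`. -/
def IsHarmonicH1 {Ω : Set (Euc N)} (f : H1Fun Ω) : Prop :=
  ∀ v : H1Fun Ω, IsH10 v → ∫ x in Ω, rip (f.grad x) (v.grad x) = 0

/-- An element of `H(Δ,Ω)`: an `H¹(Ω)` function whose weak Laplacian is in `L²(Ω)`. -/
structure HDFun (Ω : Set (Euc N)) extends H1Fun Ω where
  lap : Euc N → ℝ
  lap_mem : MemLp lap 2 (volΩ Ω)
  weak_lap : HasWeakDiv Ω grad lap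

/-- An element of `H₀(Δ,Ω) = H(Δ,Ω) ∩ H¹₀(Ω)`. -/
structure H0DFun (Ω : Set (Euc N)) extends HDFun Ω where
  bc : IsH10 toH1Fun

/-- The `Δ`-inner product `[u,v]_Δ = ∫_Ω Δu Δv dx` on `H₀(Δ,Ω)`. -/
def lapIP {Ω : Set (Euc N)} (f g : H0DFun Ω) : ℝ := ∫ x in Ω, f.lap x * g.lap x

/-- The squared `Δ`-norm `‖u‖_Δ² = ∫_Ω |Δu|² dx`. -/
def deltaNormSq {Ω : Set (Euc N)} (f : H0DFun Ω) : ℝ := ∫ x in Ω, (f.lap x) ^ 2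

/-- A function in `H(Δ,Ω)` is weakly biharmonic if `∫_Ω Δb Δφ = 0` for all `φ ∈ C_c²(Ω)`. -/
def IsBiharmonic {Ω : Set (Euc N)} (f : HDFun Ω) : Prop :=
  ∀ φ, IsCc2Fun Ω φ → ∫ x in Ω, f.lap x * clLap φ x = 0

/-- Membership in the harmonic Bergman space `L²_H(Ω)`:
`h ∈ L²(Ω)` and `∫_Ω h Δφ = 0` for all `φ ∈ C_c²(Ω)`. -/
def MemL2H (Ω : Set (Euc N)) (h : Euc N → ℝ) : Prop :=
  MemLp h 2 (volΩ Ω) ∧ ∀ φ, IsCc2Fun Ω φ → ∫ x in Ω, h x * clLap φ x = 0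

/-- `lam` is an eigenvalue of the Dirichlet Laplacian on `Ω`. -/
def IsDirEV (Ω : Set (Euc N)) (lam : ℝ) : Prop :=
  ∃ e : H1Fun Ω, IsH10 e ∧ ¬(e.u =ᵐ[volΩ Ω] (0 : Euc N → ℝ)) ∧
    ∀ v : H1Fun Ω, IsH10 v →
      ∫ x in Ω, rip (e.grad x) (v.grad x) = lam * ∫ x in Ω, e.u x * v.u x

/-- A bounded region satisfying hypothesis (B1), together with the boundary
objects whose existence (B1) guarantees: the outward unit normal `ν`, the
boundary trace operator `γ` on `H¹(Ω)` (characterized by compatibility with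
continuous functions and the Gauss-Green theorem), and the normal derivative
operator `D_ν` on `H₀(Δ,Ω)` (characterized by Green's identity). -/
structure B1Setting (N : ℕ) : Type where
  /-- the region -/
  Ω : Set (Euc N)
  conn : IsConnected Ω
  opn : IsOpen Ω
  bdd : Bornology.IsBounded Ω
  /-- the boundary has finite surface measure -/
  fin_bdry : surf Ω univ < ⊤
  /-- the outward unit normal vector field -/
  ν : Euc N → Euc N
  ν_unit : ∀ᵐ z ∂(surf Ω), ‖ν z‖ = 1
  /-- the boundary trace operator `γ : H¹(Ω) → L²(∂Ω, dσ)` -/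
  trace : H1Fun Ω → Euc N → ℝ
  trace_mem : ∀ f, MemLp (trace f) 2 (surf Ω)
  trace_of_continuous : ∀ f : H1Fun Ω, ContinuousOn f.u (closure Ω) →
    trace f =ᵐ[surf Ω] f.u
  trace_congr : ∀ f g : H1Fun Ω, f.u =ᵐ[volΩ Ω] g.u → trace f =ᵐ[surf Ω] trace g
  trace_zero : ∀ f : H1Fun Ω, IsH10 f → trace f =ᵐ[surf Ω] (0 : Euc N → ℝ)
  /-- the Gauss-Green theorem `∫_Ω u D_i v + ∫_Ω v D_i u = ∫_∂Ω γu γv νᵢ dσ` -/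
  gauss_green : ∀ f g : H1Fun Ω, ∀ i : Fin N,
    (∫ x in Ω, f.u x * g.grad x i) + (∫ x in Ω, g.u x * f.grad x i)
      = ∫ z, trace f z * trace g z * ν z i ∂(surf Ω)
  /-- the normal derivative operator `D_ν` on `H₀(Δ,Ω)` -/
  dnu : H0DFun Ω → Euc N → ℝ
  dnu_mem : ∀ f, MemLp (dnu f) 2 (surf Ω)
  /-- Green's identity `∫_Ω v Δu + ∫_Ω ∇v·∇u = ∫_∂Ω γv D_ν u dσ`,
  characterizing `D_ν u` for `u ∈ H₀(Δ,Ω)` -/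
  green : ∀ (f : H0DFun Ω) (v : H1Fun Ω),
    (∫ x in Ω, v.u x * f.lap x) + (∫ x in Ω, rip (v.grad x) (f.grad x))
      = ∫ z, trace v z * dnu f z ∂(surf Ω)

namespace B1Setting

variable (S : B1Setting N)

/-- the surface area `|∂Ω|` of the boundary -/
def area : ℝ := (surf S.Ω univ).toReal

/-- the `∂`-inner product `[u,v]_∂ = ∫_Ω ∇u·∇v dx + |∂Ω|⁻¹ ∫_∂Ω γu γv dσ` on `H¹(Ω)` -/
def dIP (f g : H1Fun S.Ω) : ℝ :=
  (∫ x in S.Ω, rip (f.grad x) (g.grad x))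
    + (S.area)⁻¹ * ∫ z, S.trace f z * S.trace g z ∂(surf S.Ω)

/-- the squared `(∂,Δ)`-norm on `H₀(Δ,Ω)` -/
def pdNormSq (f : H0DFun S.Ω) : ℝ :=
  S.dIP f.toH1Fun f.toH1Fun + ∫ x in S.Ω, (f.lap x) ^ 2

/-- the functional `M(u) = ∫_∂Ω |D_ν u|² dσ` -/
def bM (f : H0DFun S.Ω) : ℝ := ∫ z, (S.dnu f z) ^ 2 ∂(surf S.Ω)

/-- the Dirichlet Biharmonic Steklov (DBS) eigenproblem: `(q,b)` with `b ≠ 0` and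
`∫_Ω Δb Δv dx = q ∫_∂Ω (D_ν b)(D_ν v) dσ` for all `v ∈ H₀(Δ,Ω)`. -/
def IsDBS (q : ℝ) (b : H0DFun S.Ω) : Prop :=
  ¬(b.u =ᵐ[volΩ S.Ω] (0 : Euc N → ℝ)) ∧
    ∀ v : H0DFun S.Ω,
      ∫ x in S.Ω, b.lap x * v.lap x = q * ∫ z, S.dnu b z * S.dnu v z ∂(surf S.Ω)

/-- Hypothesis (B2): (B1) together with compactness of
`D_ν : H₀(Δ,Ω) → L²(∂Ω, dσ)`. -/
def B2 : Prop :=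
  ∀ f : ℕ → H0DFun S.Ω, (∀ n, S.pdNormSq (f n) ≤ 1) →
    ∃ (k : ℕ → ℕ) (g : Euc N → ℝ), StrictMono k ∧
      Tendsto (fun m => eLpNorm (fun z => S.dnu (f (k m)) z - g z) 2 (surf S.Ω))
        atTop (𝓝 0)

/-- Membership in `H₀₀(Δ,Ω) = {u ∈ H₀(Δ,Ω) : D_ν u = 0 on ∂Ω}`. -/
def IsH00 (f : H0DFun S.Ω) : Prop := S.dnu f =ᵐ[surf S.Ω] (0 : Euc N → ℝ)

/-- Membership in `W = Δ(H₀₀(Δ,Ω)) ⊆ L²(Ω)`. -/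
def MemW (g : Euc N → ℝ) : Prop :=
  ∃ ψ : H0DFun S.Ω, S.IsH00 ψ ∧ g =ᵐ[volΩ S.Ω] ψ.lap

end B1Setting


namespace Statement3Aux

variable {N : ℕ}

lemma coord_abs_le_norm (i : Fin N) (x : Euc N) : |x i| ≤ ‖x‖ := by
  have h := abs_real_inner_le_norm (EuclideanSpace.single i (1 : ℝ)) x
  rw [EuclideanSpace.inner_single_left] at h
  simpa [EuclideanSpace.norm_single] using h

lemma coord_continuous (i : Fin N) : Continuous (fun x : Euc N => x i) :=
  (EuclideanSpace.proj (𝕜 := ℝ) i).continuous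

lemma pder_continuous {φ : Euc N → ℝ} (hφ : ContDiff ℝ (⊤ : ℕ∞) φ) (j : Fin N) :
    Continuous (pder φ j) := by
  have h : ContDiff ℝ (⊤ : ℕ∞) (fderiv ℝ φ) := hφ.fderiv_right (by exact_mod_cast le_top)
  exact h.continuous.clm_apply continuous_const

lemma pder_hcs {φ : Euc N → ℝ} (hφ : HasCompactSupport φ) (j : Fin N) :
    HasCompactSupport (pder φ j) := by
  have h := hφ.fderiv (𝕜 := ℝ)
  exact h.comp_left (g := fun L : Euc N →L[ℝ] ℝ => L (EuclideanSpace.single j 1)) rfl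

lemma pder_coord_mul {φ : Euc N → ℝ} (hφ : ContDiff ℝ (⊤ : ℕ∞) φ) (i j : Fin N) (x : Euc N) :
    pder (fun y => y i * φ y) j x
      = x i * pder φ j x + (if i = j then φ x else 0) := by
  have hc : HasFDerivAt (fun y : Euc N => y i) (EuclideanSpace.proj (𝕜 := ℝ) i) x :=
    (EuclideanSpace.proj (𝕜 := ℝ) i).hasFDerivAt
  have hd : HasFDerivAt φ (fderiv ℝ φ x) x :=
    ((hφ.differentiable (by simp)) x).hasFDerivAt
  have h := hc.mul hd
  rw [pder, show (fun y : Euc N => y i * φ y) = (fun y => y i) * φ from rfl, h.fderiv]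
  simp only [ContinuousLinearMap.add_apply, ContinuousLinearMap.smul_apply, smul_eq_mul]
  have hproj : (EuclideanSpace.proj (𝕜 := ℝ) i) (EuclideanSpace.single j 1)
      = EuclideanSpace.single j (1 : ℝ) i := rfl
  rw [hproj, EuclideanSpace.single_apply]
  by_cases hij : i = j <;> simp [hij, pder, eq_comm]

end Statement3Aux

/-- under (B2), every DBS eigenvalue is strictly positive. -/
theorem statement_3 {N : ℕ} (hN : 2 ≤ N) (S : B1Setting N) (hB2 : S.B2)
    (q : ℝ) (b : H0DFun S.Ω) (hb : S.IsDBS q b) : 0 < q := by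
  classical
  by_contra hq
  push_neg at hq
  obtain ⟨hbne, heig⟩ := hb
  haveI : IsFiniteMeasure (volΩ S.Ω) :=
    ⟨by rw [volΩ, Measure.restrict_apply_univ]; exact S.bdd.measure_lt_top⟩
  -- Step 1 : the Laplacian of b vanishes a.e.
  have hMn : 0 ≤ ∫ z, S.dnu b z * S.dnu b z ∂(surf S.Ω) :=
    integral_nonneg fun z => mul_self_nonneg _
  have hLn : 0 ≤ ∫ x in S.Ω, b.lap x * b.lap x :=
    integral_nonneg fun x => mul_self_nonneg _
  have hL0 : ∫ x in S.Ω, b.lap x * b.lap x = 0 := by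
    have h1 := heig b
    have h2 : q * ∫ z, S.dnu b z * S.dnu b z ∂(surf S.Ω) ≤ 0 :=
      mul_nonpos_iff.mpr (Or.inr ⟨hq, hMn⟩)
    linarith
  have hIlap : Integrable (fun x => b.lap x * b.lap x) (volΩ S.Ω) := by
    simpa [pow_two] using b.lap_mem.integrable_sq
  have hlap0 : b.lap =ᵐ[volΩ S.Ω] 0 := by
    have h := (integral_eq_zero_iff_of_nonneg (fun x => mul_self_nonneg _) hIlap).mp hL0
    filter_upwards [h] with x hx
    exact mul_self_eq_zero.mp hx
  -- Step 2 : the gradient of b vanishes a.e.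
  have htr0 : S.trace b.toH1Fun =ᵐ[surf S.Ω] (0 : Euc N → ℝ) := S.trace_zero b.toH1Fun b.bc
  have hgreen := S.green b b.toH1Fun
  have hterm1 : ∫ x in S.Ω, b.toH1Fun.u x * b.lap x = 0 := by
    have h0 : (fun x => b.toH1Fun.u x * b.lap x) =ᵐ[volΩ S.Ω] (fun _ => (0:ℝ)) := by
      filter_upwards [hlap0] with x hx; simp [hx]
    simpa [volΩ] using integral_congr_ae h0
  have hRHSg : ∫ z, S.trace b.toH1Fun z * S.dnu b z ∂(surf S.Ω) = 0 := by
    have h0 : (fun z => S.trace b.toH1Fun z * S.dnu b z) =ᵐ[surf S.Ω] (fun _ => (0:ℝ)) := by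
      filter_upwards [htr0] with z hz; simp [hz]
    simpa using integral_congr_ae h0
  have hrip : ∀ x : Euc N, rip (b.toH1Fun.grad x) (b.toH1Fun.grad x) = ‖b.toH1Fun.grad x‖^2 :=
    fun x => real_inner_self_eq_norm_sq _
  have hgnorm0 : ∫ x in S.Ω, rip (b.toH1Fun.grad x) (b.toH1Fun.grad x) = 0 := by linarith
  simp only [hrip] at hgnorm0
  have hInt2 : Integrable (fun x => ‖b.toH1Fun.grad x‖^2) (volΩ S.Ω) :=
    b.grad_mem.norm.integrable_sq
  have hgrad0 : b.toH1Fun.grad =ᵐ[volΩ S.Ω] 0 := by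
    have h := (integral_eq_zero_iff_of_nonneg (fun x => sq_nonneg _) hInt2).mp hgnorm0
    filter_upwards [h] with x hx
    have h2 := (pow_eq_zero_iff (n := 2) (by norm_num)).mp hx
    simpa using norm_eq_zero.mp h2
  -- Step 3 : construct the auxiliary H¹ function g(x) = xᵢ · b(x)
  have hN0 : 0 < N := by omega
  set i : Fin N := ⟨0, hN0⟩ with hidef
  obtain ⟨C, hC⟩ := isBounded_iff_forall_norm_le.mp S.bdd
  have humem : MemLp (fun x : Euc N => x i * b.toH1Fun.u x) 2 (volΩ S.Ω) := by
    refine MemLp.of_le_mul (c := C) b.u_mem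
      (((Statement3Aux.coord_continuous i).aestronglyMeasurable).mul b.u_mem.1) ?_
    rw [volΩ]
    refine (ae_restrict_iff' S.opn.measurableSet).mpr (Eventually.of_forall fun x hx => ?_)
    have h1 : |x i| ≤ C := (Statement3Aux.coord_abs_le_norm i x).trans (hC x hx)
    simp only [Real.norm_eq_abs, abs_mul]
    exact mul_le_mul_of_nonneg_right h1 (abs_nonneg _)
  have hgmem : MemLp (fun x : Euc N => EuclideanSpace.single i (b.toH1Fun.u x)) 2 (volΩ S.Ω) := by
    have hLe : (fun x : Euc N => EuclideanSpace.single i (b.toH1Fun.u x))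
        = fun x => ((ContinuousLinearMap.id ℝ ℝ).smulRight
            (EuclideanSpace.single i (1:ℝ))) (b.toH1Fun.u x) := by
      funext x
      simp only [ContinuousLinearMap.smulRight_apply, ContinuousLinearMap.id_apply]
      ext j
      simp only [EuclideanSpace.single_apply, PiLp.smul_apply, smul_eq_mul]
      split <;> simp
    rw [hLe]
    exact ((ContinuousLinearMap.id ℝ ℝ).smulRight
      (EuclideanSpace.single i (1:ℝ))).comp_memLp' b.u_mem
  have hIu : Integrable b.toH1Fun.u (volΩ S.Ω) := b.u_mem.integrable one_le_two
  have hwg : HasWeakGrad S.Ω (fun x : Euc N => x i * b.toH1Fun.u x)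
      (fun x : Euc N => EuclideanSpace.single i (b.toH1Fun.u x)) := by
    intro φ hφ j
    have hψ : IsTestFun S.Ω (fun y : Euc N => y i * φ y) := by
      refine ⟨(EuclideanSpace.proj (𝕜 := ℝ) i).contDiff.mul hφ.1, hφ.2.1.mul_left,
        tsupport_mul_subset_right.trans hφ.2.2⟩
    have hb' := b.weak_grad _ hψ j
    beta_reduce at hb'
    have hRHS0 : ∫ x in S.Ω, b.toH1Fun.grad x j * (x i * φ x) = 0 := by
      have h0 : (fun x : Euc N => b.toH1Fun.grad x j * (x i * φ x))
          =ᵐ[volΩ S.Ω] (fun _ => (0:ℝ)) := by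
        filter_upwards [hgrad0] with x hx; simp [hx]
      simpa [volΩ] using integral_congr_ae h0
    rw [hRHS0, neg_zero] at hb'
    have hpd : ∀ x : Euc N, b.toH1Fun.u x * pder (fun y : Euc N => y i * φ y) j x
        = (x i * b.toH1Fun.u x) * pder φ j x
          + (if i = j then φ x * b.toH1Fun.u x else 0) := by
      intro x
      rw [Statement3Aux.pder_coord_mul hφ.1]
      by_cases hij : i = j <;> simp [hij] <;> ring
    simp only [hpd] at hb'
    by_cases hij : i = j
    · subst hij
      simp only [if_pos rfl, eq_self_iff_true, if_true] at hb'
      have hfc : Continuous (fun x : Euc N => x i * pder φ i x) :=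
        (Statement3Aux.coord_continuous i).mul (Statement3Aux.pder_continuous hφ.1 i)
      have hcs : HasCompactSupport (fun x : Euc N => x i * pder φ i x) :=
        (Statement3Aux.pder_hcs hφ.2.1 i).mul_left
      have hfb : ∃ Cb, ∀ x : Euc N, ‖x i * pder φ i x‖ ≤ Cb :=
        hcs.exists_bound_of_continuous hfc
      have hIA : Integrable (fun x : Euc N => (x i * pder φ i x) * b.toH1Fun.u x) (volΩ S.Ω) :=
        hIu.bdd_mul hfc.aestronglyMeasurable (ae_of_all _ hfb.choose_spec)
      have hφb : ∃ Cb, ∀ x : Euc N, ‖φ x‖ ≤ Cb :=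
        hφ.2.1.exists_bound_of_continuous hφ.1.continuous
      have hIB : Integrable (fun x : Euc N => φ x * b.toH1Fun.u x) (volΩ S.Ω) :=
        hIu.bdd_mul hφ.1.continuous.aestronglyMeasurable (ae_of_all _ hφb.choose_spec)
      have hsum : (∫ x, (x i * pder φ i x) * b.toH1Fun.u x ∂(volΩ S.Ω))
          + ∫ x, φ x * b.toH1Fun.u x ∂(volΩ S.Ω) = 0 := by
        rw [← integral_add hIA hIB]
        have hcg := integral_congr_ae (μ := volΩ S.Ω)
          (f := fun x : Euc N => (x i * pder φ i x) * b.toH1Fun.u x + φ x * b.toH1Fun.u x)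
          (g := fun x : Euc N => (x i * b.toH1Fun.u x) * pder φ i x + φ x * b.toH1Fun.u x)
          (Eventually.of_forall fun x => by beta_reduce; ring)
        rw [hcg]
        exact hb'
      show (∫ x, (x i * b.toH1Fun.u x) * pder φ i x ∂(volΩ S.Ω))
          = -∫ x, EuclideanSpace.single i (b.toH1Fun.u x) i * φ x ∂(volΩ S.Ω)
      have h1 : (∫ x, (x i * b.toH1Fun.u x) * pder φ i x ∂(volΩ S.Ω))
          = ∫ x, (x i * pder φ i x) * b.toH1Fun.u x ∂(volΩ S.Ω) :=
        integral_congr_ae (Eventually.of_forall fun x => by beta_reduce; ring)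
      have h2 : (∫ x, EuclideanSpace.single i (b.toH1Fun.u x) i * φ x ∂(volΩ S.Ω))
          = ∫ x, φ x * b.toH1Fun.u x ∂(volΩ S.Ω) :=
        integral_congr_ae (Eventually.of_forall fun x => by
          beta_reduce; rw [EuclideanSpace.single_apply, if_pos rfl]; ring)
      rw [h1, h2]
      linarith
    · simp only [if_neg hij, add_zero] at hb'
      have h2 : ∫ x in S.Ω, EuclideanSpace.single i (b.toH1Fun.u x) j * φ x = 0 := by
        have h0 : ∀ x : Euc N, EuclideanSpace.single i (b.toH1Fun.u x) j * φ x = 0 := by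
          intro x
          rw [EuclideanSpace.single_apply, if_neg (fun h => hij h.symm), zero_mul]
        simp only [h0, integral_zero]
      rw [h2, neg_zero]
      exact hb'
  let g : H1Fun S.Ω :=
    ⟨fun x => x i * b.toH1Fun.u x, fun x => EuclideanSpace.single i (b.toH1Fun.u x),
      humem, hgmem, hwg⟩
  -- Step 4 : Gauss–Green forces ∫ b² = 0
  have hgg := S.gauss_green b.toH1Fun g i
  have hRHSgg : ∫ z, S.trace b.toH1Fun z * S.trace g z * S.ν z i ∂(surf S.Ω) = 0 := by
    have h0 : (fun z => S.trace b.toH1Fun z * S.trace g z * S.ν z i)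
        =ᵐ[surf S.Ω] (fun _ => (0:ℝ)) := by
      filter_upwards [htr0] with z hz; simp [hz]
    simpa using integral_congr_ae h0
  have hT2 : ∫ x in S.Ω, g.u x * b.toH1Fun.grad x i = 0 := by
    have h0 : (fun x => g.u x * b.toH1Fun.grad x i) =ᵐ[volΩ S.Ω] (fun _ => (0:ℝ)) := by
      filter_upwards [hgrad0] with x hx; simp [hx]
    simpa [volΩ] using integral_congr_ae h0
  have hT1 : ∫ x in S.Ω, b.toH1Fun.u x * g.grad x i
      = ∫ x in S.Ω, b.toH1Fun.u x * b.toH1Fun.u x := by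
    refine integral_congr_ae (Eventually.of_forall fun x => ?_)
    show b.toH1Fun.u x * EuclideanSpace.single i (b.toH1Fun.u x) i = _
    rw [EuclideanSpace.single_apply, if_pos rfl]
  have husq : ∫ x in S.Ω, b.toH1Fun.u x * b.toH1Fun.u x = 0 := by
    rw [hT1, hT2, hRHSgg] at hgg; linarith
  have hIu2 : Integrable (fun x => b.toH1Fun.u x * b.toH1Fun.u x) (volΩ S.Ω) := by
    simpa [pow_two] using b.u_mem.integrable_sq
  have hu0 : b.toH1Fun.u =ᵐ[volΩ S.Ω] 0 := by
    have h := (integral_eq_zero_iff_of_nonneg (fun x => mul_self_nonneg _) hIu2).mp husq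
    filter_upwards [h] with x hx
    exact mul_self_eq_zero.mp hx
  exact hbne hu0


end
end

section
/- Assume (B2) holds, let {b_j : j ≥ 1} be a Δ-orthonormal sequence of DBS eigenfunctions, and set h_j := Δb_j. Then each h_j is a weakly harmonic function on Ω, so h_j ∈ L²_H(Ω), and the family {h_j : j ≥ 1} is orthonormal in L²(Ω). -/
open MeasureTheory Filter Set Topology
open scoped ENNReal

noncomputable section

variable {N : ℕ}


/-! ### Auxiliary lemmas -/

section AuxCalc
open Metric Function
open scoped Convolution

variable {N : ℕ}

lemma contDiff_pder {g : Euc N → ℝ} {n : ℕ∞} (hg : ContDiff ℝ (n + 1) g) (i : Fin N) :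
    ContDiff ℝ n (pder g i) :=
  (ContinuousLinearMap.apply ℝ ℝ (EuclideanSpace.single i (1 : ℝ))).contDiff.comp
    (hg.fderiv_right le_rfl)

lemma continuous_pder {g : Euc N → ℝ} (hg : ContDiff ℝ 1 g) (i : Fin N) :
    Continuous (pder g i) := by
  have h : ContDiff ℝ ((0 : ℕ∞) + 1) g := by simpa using hg
  exact (contDiff_pder h i).continuous

lemma pder_eq_zero_of_nmem {g : Euc N → ℝ} {x : Euc N} (h : x ∉ tsupport g) (i : Fin N) :
    pder g i x = 0 := by
  have h0 : fderiv ℝ g x = 0 := by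
    by_contra h'
    exact h (support_fderiv_subset ℝ (Function.mem_support.2 h'))
  simp [pder, h0]

lemma tsupport_pder_subset {g : Euc N → ℝ} (i : Fin N) : tsupport (pder g i) ⊆ tsupport g :=
  closure_minimal (fun x hx => by
    by_contra h
    exact hx (pder_eq_zero_of_nmem h i)) isClosed_closure

lemma hasCompactSupport_pder {g : Euc N → ℝ} (hg : HasCompactSupport g) (i : Fin N) :
    HasCompactSupport (pder g i) :=
  IsCompact.of_isClosed_subset hg isClosed_closure (tsupport_pder_subset i)

lemma clLap_eq_zero_of_nmem {φ : Euc N → ℝ} {x : Euc N} (h : x ∉ tsupport φ) :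
    clLap φ x = 0 := by
  unfold clLap
  refine Finset.sum_eq_zero fun i _ => ?_
  exact pder_eq_zero_of_nmem (fun hx => h (tsupport_pder_subset i hx)) i

lemma hasCompactSupport_clLap {φ : Euc N → ℝ} (hφ : HasCompactSupport φ) :
    HasCompactSupport (clLap φ) :=
  IsCompact.of_isClosed_subset hφ isClosed_closure
    (closure_minimal (fun x hx => by
      by_contra h
      exact hx (clLap_eq_zero_of_nmem h)) isClosed_closure)

lemma continuous_clLap {φ : Euc N → ℝ} (hφ : ContDiff ℝ 2 φ) : Continuous (clLap φ) := by
  have h2 : ContDiff ℝ ((1 : ℕ∞) + 1) φ := by norm_num; exact hφ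
  exact continuous_finset_sum _ fun i _ => continuous_pder (contDiff_pder h2 i) i

lemma continuous_clGrad {g : Euc N → ℝ} (hg : ContDiff ℝ 1 g) : Continuous (clGrad g) := by
  unfold clGrad
  exact (PiLp.continuous_toLp 2 (fun _ : Fin N => ℝ)).comp
    (continuous_pi fun i => continuous_pder hg i)


lemma contDiff_of_top {g : Euc N → ℝ} {n : ℕ∞} (hg : ContDiff ℝ (⊤ : ℕ∞) g) :
    ContDiff ℝ n g := hg.of_le (by exact_mod_cast le_top)

lemma ibp_core {f g : Euc N → ℝ} (hf : ContDiff ℝ 1 f) (hg : ContDiff ℝ 1 g)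
    (hgs : HasCompactSupport g) (i : Fin N) :
    ∫ x, f x * pder g i x = - ∫ x, pder f i x * g x := by
  have hpf : Continuous (pder f i) := continuous_pder hf i
  have hpg : Continuous (pder g i) := continuous_pder hg i
  have h1 : Integrable (fun x => pder f i x * g x) := by
    apply Continuous.integrable_of_hasCompactSupport (hpf.mul hg.continuous)
    exact hgs.mul_left
  have h2 : Integrable (fun x => f x * pder g i x) := by
    apply Continuous.integrable_of_hasCompactSupport (hf.continuous.mul hpg)
    exact (hasCompactSupport_pder hgs i).mul_left
  have h3 : Integrable (fun x => f x * g x) := by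
    apply Continuous.integrable_of_hasCompactSupport (hf.continuous.mul hg.continuous)
    exact hgs.mul_left
  exact integral_mul_fderiv_eq_neg_fderiv_mul_of_integrable h1 h2 h3
    (fun x _ => hf.differentiable one_ne_zero x) (fun x _ => hg.differentiable one_ne_zero x)

lemma setIntegral_eq_global {Ω : Set (Euc N)} {F : Euc N → ℝ} (h : ∀ x ∉ Ω, F x = 0) :
    ∫ x in Ω, F x = ∫ x, F x :=
  setIntegral_eq_integral_of_forall_compl_eq_zero h

lemma isFiniteMeasure_volΩ {Ω : Set (Euc N)} (hb : Bornology.IsBounded Ω) :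
    IsFiniteMeasure (volΩ Ω) := by
  constructor
  rw [volΩ, Measure.restrict_apply_univ]
  exact hb.measure_lt_top

lemma memL2_restrict_of_continuous {Ω : Set (Euc N)} (hΩ : MeasurableSet Ω)
    (hb : Bornology.IsBounded Ω) {E : Type*} [NormedAddCommGroup E] {f : Euc N → E}
    (hf : Continuous f) : MemLp f 2 (volΩ Ω) := by
  haveI : IsFiniteMeasure (volΩ Ω) := isFiniteMeasure_volΩ hb
  obtain ⟨C, hC⟩ : ∃ C, ∀ x ∈ closure Ω, ‖f x‖ ≤ C :=
    (Metric.isCompact_of_isClosed_isBounded isClosed_closure hb.closure).exists_bound_of_continuousOn hf.continuousOn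
  refine MemLp.of_bound (hf.aestronglyMeasurable.restrict) C ?_
  rw [volΩ, ae_restrict_iff' hΩ]
  exact ae_of_all _ fun x hx => hC x (subset_closure hx)

/-- For a test function `ψ` (or any function with `tsupport ψ ⊆ Ω`), functions involving
a factor supported in `tsupport ψ` vanish outside `Ω`. -/
lemma testfun_zero_outside {Ω : Set (Euc N)} {ψ : Euc N → ℝ} (hs : tsupport ψ ⊆ Ω)
    {x : Euc N} (hx : x ∉ Ω) : ψ x = 0 :=
  image_eq_zero_of_notMem_tsupport fun h => hx (hs h)

lemma testfun_pder_zero_outside {Ω : Set (Euc N)} {ψ : Euc N → ℝ} (hs : tsupport ψ ⊆ Ω)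
    {x : Euc N} (hx : x ∉ Ω) (i : Fin N) : pder ψ i x = 0 :=
  pder_eq_zero_of_nmem (g := ψ) (fun h => hx (hs h)) i

/-- Integration by parts against a test function, on `Ω`. -/
lemma ibp_test {Ω : Set (Euc N)} {f ψ : Euc N → ℝ} (hf : ContDiff ℝ 1 f)
    (hψ1 : ContDiff ℝ 1 ψ) (hψ2 : HasCompactSupport ψ) (hψ3 : tsupport ψ ⊆ Ω) (i : Fin N) :
    ∫ x in Ω, f x * pder ψ i x = - ∫ x in Ω, pder f i x * ψ x := by
  rw [setIntegral_eq_global (fun x hx => by rw [testfun_pder_zero_outside hψ3 hx i, mul_zero]),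
    setIntegral_eq_global (fun x hx => by rw [testfun_zero_outside hψ3 hx, mul_zero])]
  exact ibp_core hf hψ1 hψ2 i

/-- The `H¹(Ω)` element associated with a globally smooth function. -/
def smoothH1 {Ω : Set (Euc N)} (hΩ : MeasurableSet Ω) (hb : Bornology.IsBounded Ω)
    (g : Euc N → ℝ) (hg : ContDiff ℝ (⊤ : ℕ∞) g) : H1Fun Ω where
  u := g
  grad := clGrad g
  u_mem := memL2_restrict_of_continuous hΩ hb hg.continuous
  grad_mem := memL2_restrict_of_continuous hΩ hb (continuous_clGrad (contDiff_of_top hg))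
  weak_grad := fun ψ hψ i =>
    ibp_test (Ω := Ω) (contDiff_of_top hg) (contDiff_of_top hψ.1) hψ.2.1 hψ.2.2 i

/-- The `H₀(Δ,Ω)` element associated with a smooth test function. -/
def testH0D {Ω : Set (Euc N)} (hΩ : MeasurableSet Ω) (hb : Bornology.IsBounded Ω)
    (ψ : Euc N → ℝ) (hψ : IsTestFun Ω ψ) : H0DFun Ω where
  toH1Fun := smoothH1 hΩ hb ψ hψ.1
  lap := clLap ψ
  lap_mem := memL2_restrict_of_continuous hΩ hb (continuous_clLap (contDiff_of_top hψ.1))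
  weak_lap := by
    intro φ hφ
    have hint : ∀ i : Fin N, Integrable (fun x => pder ψ i x * pder φ i x) (volΩ Ω) := by
      intro i
      refine Integrable.restrict ?_
      apply Continuous.integrable_of_hasCompactSupport
        ((continuous_pder (contDiff_of_top hψ.1) i).mul (continuous_pder (contDiff_of_top hφ.1) i))
      exact (hasCompactSupport_pder hφ.2.1 i).mul_left
    calc ∫ x in Ω, (∑ i, (smoothH1 hΩ hb ψ hψ.1).grad x i * pder φ i x)
        = ∫ x in Ω, (∑ i, pder ψ i x * pder φ i x) := rfl
      _ = ∑ i, ∫ x in Ω, pder ψ i x * pder φ i x := integral_finset_sum _ fun i _ => hint i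
      _ = ∑ i, -∫ x in Ω, pder (pder ψ i) i x * φ x := by
          refine Finset.sum_congr rfl fun i _ => ?_
          have h2 : ContDiff ℝ ((1 : ℕ∞) + 1) ψ := contDiff_of_top hψ.1
          exact ibp_test (contDiff_pder h2 i) (contDiff_of_top hφ.1) hφ.2.1 hφ.2.2 i
      _ = - ∑ i, ∫ x in Ω, pder (pder ψ i) i x * φ x := by rw [Finset.sum_neg_distrib]
      _ = - ∫ x in Ω, (∑ i, pder (pder ψ i) i x * φ x) := by
          congr 1
          refine (integral_finset_sum _ fun i _ => ?_).symm
          refine Integrable.restrict ?_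
          have h2 : ContDiff ℝ ((1 : ℕ∞) + 1) ψ := contDiff_of_top hψ.1
          apply Continuous.integrable_of_hasCompactSupport
            ((continuous_pder (contDiff_pder h2 i) i).mul hφ.1.continuous)
          exact hφ.2.1.mul_left
      _ = - ∫ x in Ω, clLap ψ x * φ x := by
          congr 1
          refine setIntegral_congr_fun hΩ fun x _ => ?_
          rw [clLap, Finset.sum_mul]
  bc := by
    refine ⟨fun _ => ψ, fun _ => hψ, ?_⟩
    have h0 : (fun _ : ℕ =>
        eLpNorm (fun x => (smoothH1 hΩ hb ψ hψ.1).u x - ψ x) 2 (volΩ Ω) +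
        eLpNorm (fun x => (smoothH1 hΩ hb ψ hψ.1).grad x - clGrad ψ x) 2 (volΩ Ω))
        = fun _ : ℕ => (0 : ℝ≥0∞) := by
      funext n
      have e1 : (fun x => (smoothH1 hΩ hb ψ hψ.1).u x - ψ x) = (fun _ => (0 : ℝ)) := by
        funext x; show ψ x - ψ x = 0; ring
      have e2 : (fun x => (smoothH1 hΩ hb ψ hψ.1).grad x - clGrad ψ x)
          = (fun _ => (0 : Euc N)) := by
        funext x; show clGrad ψ x - clGrad ψ x = 0; simp
      rw [e1, e2]
      simp [eLpNorm_zero']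
    rw [h0]
    exact tendsto_const_nhds

end AuxCalc

section AuxGreen
open Metric Function
open scoped Convolution

variable {N : ℕ}

lemma rip_clGrad_eq {g ψ : Euc N → ℝ} (x : Euc N) :
    rip (clGrad g x) (clGrad ψ x) = ∑ i, pder g i x * pder ψ i x := by
  simp [rip, clGrad, PiLp.inner_apply, PiLp.toLp_apply, RCLike.inner_apply,
    conj_trivial, mul_comm]

lemma integral_smooth_mul_dnu_test (S : B1Setting N) {ψ : Euc N → ℝ} (hψ : IsTestFun S.Ω ψ)
    {g : Euc N → ℝ} (hg : ContDiff ℝ (⊤ : ℕ∞) g) :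
    ∫ z, g z * S.dnu (testH0D S.opn.measurableSet S.bdd ψ hψ) z ∂(surf S.Ω) = 0 := by
  have hΩ := S.opn.measurableSet
  have hψ2 : ContDiff ℝ ((1 : ℕ∞) + 1) ψ := contDiff_of_top hψ.1
  have hgreen := S.green (testH0D hΩ S.bdd ψ hψ) (smoothH1 hΩ S.bdd g hg)
  have htr : ∫ z, S.trace (smoothH1 hΩ S.bdd g hg) z *
        S.dnu (testH0D hΩ S.bdd ψ hψ) z ∂(surf S.Ω)
      = ∫ z, g z * S.dnu (testH0D hΩ S.bdd ψ hψ) z ∂(surf S.Ω) := by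
    refine integral_congr_ae ?_
    filter_upwards [S.trace_of_continuous (smoothH1 hΩ S.bdd g hg) hg.continuous.continuousOn]
      with z hz
    rw [hz]
    rfl
  have key : ∀ i : Fin N, (∫ x in S.Ω, g x * pder (pder ψ i) i x)
      + (∫ x in S.Ω, pder g i x * pder ψ i x) = 0 := by
    intro i
    have h := ibp_test (Ω := S.Ω) (contDiff_of_top hg) (contDiff_pder hψ2 i)
      (hasCompactSupport_pder hψ.2.1 i) ((tsupport_pder_subset i).trans hψ.2.2) i
    rw [h]; ring
  have hint1 : ∀ i : Fin N, Integrable (fun x => g x * pder (pder ψ i) i x) (volume.restrict S.Ω) := by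
    intro i
    refine Integrable.restrict ?_
    apply Continuous.integrable_of_hasCompactSupport
      (hg.continuous.mul (continuous_pder (contDiff_pder hψ2 i) i))
    exact (hasCompactSupport_pder (hasCompactSupport_pder hψ.2.1 i) i).mul_left
  have hint2 : ∀ i : Fin N, Integrable (fun x => pder g i x * pder ψ i x) (volume.restrict S.Ω) := by
    intro i
    refine Integrable.restrict ?_
    apply Continuous.integrable_of_hasCompactSupport
      ((continuous_pder (contDiff_of_top hg) i).mul (continuous_pder (contDiff_of_top hψ.1) i))
    exact (hasCompactSupport_pder hψ.2.1 i).mul_left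
  have e1 : ∫ x in S.Ω, (smoothH1 hΩ S.bdd g hg).u x * (testH0D hΩ S.bdd ψ hψ).lap x
      = ∑ i, ∫ x in S.Ω, g x * pder (pder ψ i) i x := by
    rw [← integral_finset_sum _ fun i _ => hint1 i]
    refine setIntegral_congr_fun hΩ fun x _ => ?_
    show g x * clLap ψ x = _
    rw [clLap, Finset.mul_sum]
  have e2 : ∫ x in S.Ω, rip ((smoothH1 hΩ S.bdd g hg).grad x) ((testH0D hΩ S.bdd ψ hψ).grad x)
      = ∑ i, ∫ x in S.Ω, pder g i x * pder ψ i x := by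
    rw [← integral_finset_sum _ fun i _ => hint2 i]
    refine setIntegral_congr_fun hΩ fun x _ => ?_
    exact rip_clGrad_eq x
  rw [e1, e2, ← Finset.sum_add_distrib] at hgreen
  rw [← htr, ← hgreen]
  exact Finset.sum_eq_zero fun i _ => key i

end AuxGreen

section Moll
open Metric Function ContinuousLinearMap Pointwise
open scoped Convolution

variable {N : ℕ}

/-- A standard mollifier bump of outer radius `r`. -/
def moll (r : ℝ) (hr : 0 < r) : ContDiffBump (0 : Euc N) :=
  { rIn := r / 2, rOut := r, rIn_pos := by linarith, rIn_lt_rOut := by linarith }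

/-- Mollification of `u` at scale `r`. -/
def mollConv (r : ℝ) (hr : 0 < r) (u : Euc N → ℝ) : Euc N → ℝ :=
  (moll (N := N) r hr).normed volume ⋆[ContinuousLinearMap.lsmul ℝ ℝ] u

lemma mollConv_contDiff {r : ℝ} {hr : 0 < r} {u : Euc N → ℝ} (hu : Continuous u) :
    ContDiff ℝ (⊤ : ℕ∞) (mollConv r hr u) :=
  HasCompactSupport.contDiff_convolution_left _ (moll r hr).hasCompactSupport_normed
    ((moll r hr).contDiff_normed) (hu.locallyIntegrable)

lemma mollConv_bound {r : ℝ} {hr : 0 < r} {u : Euc N → ℝ} {C : ℝ}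
    (hu : AEStronglyMeasurable u volume) (hC : 0 ≤ C) (hb : ∀ x, ‖u x‖ ≤ C) (x : Euc N) :
    ‖mollConv r hr u x‖ ≤ C := by
  have h := dist_convolution_le (f := (moll (N := N) r hr).normed volume) (x₀ := x)
    (z₀ := (0 : ℝ)) (R := r) hC (moll r hr).support_normed_eq.subset
    (moll r hr).nonneg_normed (moll r hr).integral_normed hu
    (fun y _ => by simpa [dist_zero_right] using hb y)
  simpa [dist_zero_right, mollConv] using h

lemma mollConv_dist_le {r : ℝ} {hr : 0 < r} {u : Euc N → ℝ} {ε : ℝ} {x : Euc N}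
    (hu : AEStronglyMeasurable u volume) (h : ∀ y ∈ ball x r, dist (u y) (u x) ≤ ε) :
    dist (mollConv r hr u x) (u x) ≤ ε :=
  ContDiffBump.dist_normed_convolution_le hu h

lemma mollConv_tendsto {u : Euc N → ℝ} (hu : Continuous u) (x : Euc N) :
    Tendsto (fun n : ℕ => mollConv (1 / (n + 1)) (by positivity) u x) atTop (𝓝 (u x)) := by
  refine ContDiffBump.convolution_tendsto_right_of_continuous
    (φ := fun n : ℕ => moll (1 / ((n : ℝ) + 1)) (by positivity)) ?_ hu x
  show Tendsto (fun n : ℕ => 1 / ((n : ℝ) + 1)) atTop (𝓝 0)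
  exact tendsto_one_div_add_atTop_nhds_zero_nat

lemma mollConv_tsupport {r : ℝ} {hr : 0 < r} {u : Euc N → ℝ} :
    tsupport (mollConv r hr u) ⊆ cthickening r (tsupport u) := by
  refine closure_minimal ?_ isClosed_cthickening
  intro x hx
  have hmem : x ∈ support ((moll (N := N) r hr).normed volume) + support u :=
    support_convolution_subset (ContinuousLinearMap.lsmul ℝ ℝ) hx
  rcases Set.mem_add.1 hmem with ⟨b, hb, y, hy, rfl⟩
  rw [(moll r hr).support_normed_eq] at hb
  refine mem_cthickening_of_dist_le _ y r _ (subset_closure hy) ?_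
  have : dist (b + y) y = ‖b‖ := by simp [dist_eq_norm]
  rw [this]
  exact le_of_lt (by simpa [moll] using hb)

lemma mollConv_hasCompactSupport {r : ℝ} {hr : 0 < r} {u : Euc N → ℝ}
    (huc : HasCompactSupport u) : HasCompactSupport (mollConv r hr u) :=
  IsCompact.of_isClosed_subset (huc.cthickening) isClosed_closure mollConv_tsupport

lemma mollConv_isTestFun {Ω : Set (Euc N)} {u : Euc N → ℝ} (hu : Continuous u)
    (huc : HasCompactSupport u) {δ : ℝ} (hδ : 0 < δ) (hsub : thickening δ (tsupport u) ⊆ Ω)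
    {r : ℝ} (hr : 0 < r) (hrδ : r < δ) : IsTestFun Ω (mollConv r hr u) :=
  ⟨mollConv_contDiff hu, mollConv_hasCompactSupport huc,
    (mollConv_tsupport).trans ((cthickening_subset_thickening' hδ hrδ _).trans hsub)⟩

lemma mollConv_pder {r : ℝ} {hr : 0 < r} {u : Euc N → ℝ} (hu : ContDiff ℝ 1 u)
    (huc : HasCompactSupport u) (i : Fin N) :
    pder (mollConv r hr u) i = mollConv r hr (pder u i) := by
  funext x
  have hk : LocallyIntegrable ((moll (N := N) r hr).normed volume) volume :=
    ((moll r hr).integrable_normed).locallyIntegrable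
  have hder := HasCompactSupport.hasFDerivAt_convolution_right
    (L := ContinuousLinearMap.lsmul ℝ ℝ) huc hk hu x
  have h1 : fderiv ℝ (mollConv r hr u) x =
      ((moll (N := N) r hr).normed volume ⋆[(ContinuousLinearMap.lsmul ℝ ℝ).precompR (Euc N)]
        fderiv ℝ u) x := hder.fderiv
  show fderiv ℝ (mollConv r hr u) x (EuclideanSpace.single i 1) = _
  rw [h1]
  have h2 := convolution_precompR_apply (L := ContinuousLinearMap.lsmul ℝ ℝ) hk
    (huc.fderiv (𝕜 := ℝ)) (hu.continuous_fderiv one_ne_zero) x (EuclideanSpace.single i 1)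
  rw [h2]
  rfl

lemma mollConv_clLap {r : ℝ} {hr : 0 < r} {φ : Euc N → ℝ} (hφ : ContDiff ℝ 2 φ)
    (hφc : HasCompactSupport φ) :
    clLap (mollConv r hr φ) = mollConv r hr (clLap φ) := by
  have h2 : ContDiff ℝ ((1 : ℕ∞) + 1) φ := by norm_num; exact hφ
  have hk : LocallyIntegrable ((moll (N := N) r hr).normed volume) volume :=
    ((moll r hr).integrable_normed).locallyIntegrable
  have hstep : ∀ i : Fin N,
      pder (pder (mollConv r hr φ) i) i = mollConv r hr (pder (pder φ i) i) := by
    intro i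
    rw [mollConv_pder (hφ.of_le (by norm_num)) hφc i,
      mollConv_pder (contDiff_pder h2 i) (hasCompactSupport_pder hφc i) i]
  funext x
  have hex : ∀ i : Fin N, Integrable fun t =>
      ((moll (N := N) r hr).normed volume t) • pder (pder φ i) i (x - t) := by
    intro i
    have h := HasCompactSupport.convolutionExists_right
      (L := ContinuousLinearMap.lsmul ℝ ℝ) (μ := volume)
      (hasCompactSupport_pder (hasCompactSupport_pder hφc i) i) hk
      (continuous_pder (contDiff_pder h2 i) i) x
    simpa [ConvolutionExistsAt, ContinuousLinearMap.lsmul_apply] using h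
  calc clLap (mollConv r hr φ) x
      = ∑ i, ∫ t, (moll (N := N) r hr).normed volume t • pder (pder φ i) i (x - t) := by
        rw [clLap]
        refine Finset.sum_congr rfl fun i _ => ?_
        rw [hstep i, mollConv, convolution_def]
        simp [ContinuousLinearMap.lsmul_apply]
    _ = ∫ t, ∑ i, (moll (N := N) r hr).normed volume t • pder (pder φ i) i (x - t) :=
        (integral_finset_sum _ fun i _ => hex i).symm
    _ = ∫ t, (moll (N := N) r hr).normed volume t • clLap φ (x - t) := by
        congr 1
        funext t
        rw [clLap, Finset.smul_sum]
    _ = mollConv r hr (clLap φ) x := by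
        rw [mollConv, convolution_def]
        simp [ContinuousLinearMap.lsmul_apply]

end Moll

section Density
open Metric Function
open scoped RealInnerProductSpace

variable {N : ℕ}

lemma inner_toLp_eq {α : Type*} [MeasurableSpace α] {μ : Measure α} {u v : α → ℝ}
    (hu : MemLp u 2 μ) (hv : MemLp v 2 μ) :
    ⟪hu.toLp u, hv.toLp v⟫ = ∫ x, u x * v x ∂μ := by
  rw [MeasureTheory.L2.inner_def]
  refine integral_congr_ae ?_
  filter_upwards [hu.coeFn_toLp, hv.coeFn_toLp] with x h1 h2
  rw [h1, h2]
  simp [RCLike.inner_apply, mul_comm]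

lemma norm_toLp_sub_sq {α : Type*} [MeasurableSpace α] {μ : Measure α} {u v : α → ℝ}
    (hu : MemLp u 2 μ) (hv : MemLp v 2 μ) :
    ‖hu.toLp u - hv.toLp v‖ ^ 2 = ∫ x, (u x - v x) ^ 2 ∂μ := by
  rw [← MemLp.toLp_sub hu hv, ← real_inner_self_eq_norm_sq, inner_toLp_eq]
  refine integral_congr_ae (Filter.Eventually.of_forall fun x => ?_)
  simp [Pi.sub_apply, sq]

lemma dnu_test_ae_zero (S : B1Setting N) (ψ : Euc N → ℝ) (hψ : IsTestFun S.Ω ψ) :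
    S.dnu (testH0D S.opn.measurableSet S.bdd ψ hψ) =ᵐ[surf S.Ω] (0 : Euc N → ℝ) := by
  classical
  haveI : IsFiniteMeasure (surf S.Ω) := ⟨S.fin_bdry⟩
  set σ := surf S.Ω with hσdef
  set A := S.dnu (testH0D S.opn.measurableSet S.bdd ψ hψ) with hAdef
  have hAmem : MemLp A 2 σ := S.dnu_mem _
  have hpair : ∀ g : Euc N → ℝ, ContDiff ℝ (⊤ : ℕ∞) g → ∫ z, g z * A z ∂σ = 0 :=
    fun g hg => integral_smooth_mul_dnu_test S hψ hg
  set a : Lp ℝ 2 σ := hAmem.toLp A with hadef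
  have key : ∀ ε : ℝ, 0 < ε → ‖a‖ ^ 2 ≤ ε * ‖a‖ := by
    intro ε hε
    obtain ⟨G, hG1, hG2⟩ := hAmem.exists_boundedContinuous_eLpNorm_sub_le
      (by norm_num : (2 : ℝ≥0∞) ≠ ∞) (ε := ENNReal.ofReal (ε / 2))
      (ENNReal.ofReal_pos.2 (by positivity)).ne'
    have hGb : ∀ x, ‖G x‖ ≤ ‖G‖ := fun x => G.norm_coe_le_norm x
    set s : ℕ → Euc N → ℝ := fun n => mollConv (1 / (n + 1)) (by positivity) ⇑G with hsdef
    have hs_smooth : ∀ n, ContDiff ℝ (⊤ : ℕ∞) (s n) := fun n => mollConv_contDiff G.continuous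
    have hs_bound : ∀ n x, ‖s n x‖ ≤ ‖G‖ := fun n x =>
      mollConv_bound G.continuous.aestronglyMeasurable (norm_nonneg G) hGb x
    have hs_mem : ∀ n, MemLp (s n) 2 σ := fun n =>
      MemLp.of_bound ((hs_smooth n).continuous.aestronglyMeasurable) ‖G‖
        (Filter.Eventually.of_forall (hs_bound n))
    have hDom : Tendsto (fun n => ∫ z, (G z - s n z) ^ 2 ∂σ) atTop (𝓝 0) := by
      have h := tendsto_integral_of_dominated_convergence (μ := σ)
        (F := fun n z => (G z - s n z) ^ 2) (f := fun _ => (0 : ℝ))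
        (bound := fun _ => (2 * ‖G‖) ^ 2)
        (fun n => ((G.continuous.sub (hs_smooth n).continuous).pow 2).aestronglyMeasurable)
        (integrable_const _)
        (fun n => Filter.Eventually.of_forall fun z => by
          have h1' := abs_le.1 (by simpa [Real.norm_eq_abs] using hGb z)
          have h2' := abs_le.1 (by simpa [Real.norm_eq_abs] using hs_bound n z)
          show ‖(G z - s n z) ^ 2‖ ≤ (2 * ‖G‖) ^ 2
          rw [Real.norm_eq_abs, abs_of_nonneg (sq_nonneg _)]
          nlinarith [norm_nonneg G, h1'.1, h1'.2, h2'.1, h2'.2])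
        (Filter.Eventually.of_forall fun z => by
          show Tendsto (fun n => (G z - s n z) ^ 2) atTop (𝓝 0)
          have h := ((tendsto_const_nhds (x := G z)).sub (mollConv_tendsto G.continuous z)).pow 2
          have hz : ((G z - G z) ^ 2 : ℝ) = 0 := by ring
          rw [hz] at h
          exact h)
      simpa using h
    obtain ⟨n, hn⟩ := (hDom.eventually_lt_const (by positivity : (0:ℝ) < (ε / 2) ^ 2)).exists
    have e1 : ‖a - hG2.toLp ⇑G‖ ≤ ε / 2 := by
      rw [hadef, ← MemLp.toLp_sub hAmem hG2, Lp.norm_toLp]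
      calc (eLpNorm (A - ⇑G) 2 σ).toReal ≤ (ENNReal.ofReal (ε / 2)).toReal :=
            ENNReal.toReal_mono (by simp) hG1
        _ = ε / 2 := ENNReal.toReal_ofReal (by positivity)
    have e2 : ‖hG2.toLp ⇑G - (hs_mem n).toLp (s n)‖ ≤ ε / 2 := by
      have hsq : ‖hG2.toLp ⇑G - (hs_mem n).toLp (s n)‖ ^ 2 ≤ (ε / 2) ^ 2 := by
        rw [norm_toLp_sub_sq]
        exact le_of_lt hn
      exact (pow_le_pow_iff_left₀ (norm_nonneg _) (by positivity) two_ne_zero).1 hsq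
    have hinner : ⟪(hs_mem n).toLp (s n), a⟫ = 0 := by
      rw [hadef, inner_toLp_eq]
      exact hpair (s n) (hs_smooth n)
    have hsplit : ⟪a, a⟫ = ⟪a - (hs_mem n).toLp (s n), a⟫ := by
      rw [inner_sub_left, hinner]; ring
    calc ‖a‖ ^ 2 = ⟪a, a⟫ := (real_inner_self_eq_norm_sq a).symm
      _ = ⟪a - (hs_mem n).toLp (s n), a⟫ := hsplit
      _ ≤ ‖a - (hs_mem n).toLp (s n)‖ * ‖a‖ := real_inner_le_norm _ _
      _ ≤ ε * ‖a‖ := by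
          have htri : ‖a - (hs_mem n).toLp (s n)‖ ≤ ε := by
            have := norm_sub_le_norm_sub_add_norm_sub a (hG2.toLp ⇑G) ((hs_mem n).toLp (s n))
            linarith
          exact mul_le_mul_of_nonneg_right htri (norm_nonneg a)
  have hnorm : ‖a‖ = 0 := by
    by_contra h
    have hpos : 0 < ‖a‖ := (norm_nonneg a).lt_of_ne (Ne.symm h)
    have := key (‖a‖ / 2) (by positivity)
    nlinarith
  have ha0 : a = 0 := norm_eq_zero.1 hnorm
  have h1 : (⇑a : Euc N → ℝ) =ᵐ[σ] A := hAmem.coeFn_toLp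
  have h2 : (⇑a : Euc N → ℝ) =ᵐ[σ] (0 : Euc N → ℝ) := by
    rw [ha0]
    exact Lp.coeFn_zero _ _ _
  exact h1.symm.trans h2

end Density

section Final
open Metric Function

variable {N : ℕ}

lemma lap_pairing_zero (S : B1Setting N) {q : ℝ} {b : H0DFun S.Ω} (hb : S.IsDBS q b) :
    ∀ φ, IsCc2Fun S.Ω φ → ∫ x in S.Ω, b.lap x * clLap φ x = 0 := by
  have hΩ := S.opn.measurableSet
  haveI : IsFiniteMeasure (volΩ S.Ω) := isFiniteMeasure_volΩ S.bdd
  haveI : IsFiniteMeasure (volume.restrict S.Ω) := isFiniteMeasure_volΩ S.bdd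
  have hsmooth : ∀ ψ, IsTestFun S.Ω ψ → ∫ x in S.Ω, b.lap x * clLap ψ x = 0 := by
    intro ψ hψ
    have h := hb.2 (testH0D hΩ S.bdd ψ hψ)
    have hz : ∫ z, S.dnu b z * S.dnu (testH0D hΩ S.bdd ψ hψ) z ∂(surf S.Ω) = 0 := by
      refine integral_eq_zero_of_ae ?_
      filter_upwards [dnu_test_ae_zero S ψ hψ] with z hz
      simp [hz]
    calc ∫ x in S.Ω, b.lap x * clLap ψ x
        = ∫ x in S.Ω, b.lap x * (testH0D hΩ S.bdd ψ hψ).lap x := rfl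
      _ = q * ∫ z, S.dnu b z * S.dnu (testH0D hΩ S.bdd ψ hψ) z ∂(surf S.Ω) := h
      _ = 0 := by rw [hz]; ring
  intro φ hφ
  have hbl : Integrable b.lap (volume.restrict S.Ω) := b.lap_mem.integrable (by norm_num)
  set B := ∫ x in S.Ω, ‖b.lap x‖ with hB
  have hBnn : 0 ≤ B := integral_nonneg fun x => norm_nonneg _
  have hmain : ∀ ε : ℝ, 0 < ε → |∫ x in S.Ω, b.lap x * clLap φ x| ≤ ε * B := by
    intro ε hε
    obtain ⟨δ, hδpos, hδsub⟩ := hφ.2.1.exists_thickening_subset_open S.opn hφ.2.2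
    have huc : Continuous (clLap φ) := continuous_clLap hφ.1
    have huhc : HasCompactSupport (clLap φ) := hasCompactSupport_clLap hφ.2.1
    have huu : UniformContinuous (clLap φ) := by
      apply huc.uniformContinuous_of_tendsto_cocompact (x := (0 : ℝ))
      have h1 : clLap φ =ᶠ[Filter.coclosedCompact (Euc N)] 0 :=
        hasCompactSupport_iff_eventuallyEq.1 huhc
      have h2 : clLap φ =ᶠ[Filter.cocompact (Euc N)] 0 := by
        rwa [Filter.coclosedCompact_eq_cocompact] at h1
      exact Filter.Tendsto.congr' h2.symm tendsto_const_nhds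
    obtain ⟨δ', hδ'pos, hδ'⟩ := Metric.uniformContinuous_iff.1 huu ε hε
    have hrpos : 0 < min (δ / 2) (δ' / 2) := lt_min (by linarith) (by linarith)
    have hrδ : min (δ / 2) (δ' / 2) < δ := (min_le_left _ _).trans_lt (by linarith)
    set ψ := mollConv (min (δ / 2) (δ' / 2)) hrpos φ with hψdef
    have hψtest : IsTestFun S.Ω ψ :=
      mollConv_isTestFun hφ.1.continuous hφ.2.1 hδpos hδsub hrpos hrδ
    have hlap : clLap ψ = mollConv (min (δ / 2) (δ' / 2)) hrpos (clLap φ) :=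
      mollConv_clLap hφ.1 hφ.2.1
    have hptw : ∀ x, ‖clLap φ x - clLap ψ x‖ ≤ ε := by
      intro x
      rw [hlap]
      have hd := mollConv_dist_le (r := min (δ / 2) (δ' / 2)) (hr := hrpos)
        (u := clLap φ) (x := x) (ε := ε) huc.aestronglyMeasurable ?_
      · rw [← dist_eq_norm, dist_comm]
        exact hd
      · intro y hy
        have hyx : dist y x < δ' :=
          lt_of_lt_of_le (mem_ball.1 hy) ((min_le_right _ _).trans (by linarith))
        exact le_of_lt (hδ' hyx)
    have hzero := hsmooth ψ hψtest
    have hcψ : Continuous (clLap ψ) := continuous_clLap (contDiff_of_top hψtest.1)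
    have hint1 : Integrable (fun x => b.lap x * clLap φ x) (volume.restrict S.Ω) :=
      (hbl.bdd_mul huc.aestronglyMeasurable.restrict
        (ae_of_all _ (huc.bounded_above_of_compact_support huhc).choose_spec)).congr
        (Filter.Eventually.of_forall fun x => mul_comm _ _)
    have hint2 : Integrable (fun x => b.lap x * clLap ψ x) (volume.restrict S.Ω) :=
      (hbl.bdd_mul hcψ.aestronglyMeasurable.restrict
        (ae_of_all _ (hcψ.bounded_above_of_compact_support (hasCompactSupport_clLap hψtest.2.1)).choose_spec)).congr
        (Filter.Eventually.of_forall fun x => mul_comm _ _)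
    have hintd : Integrable (fun x => b.lap x * (clLap φ x - clLap ψ x)) (volume.restrict S.Ω) := by
      have := hint1.sub hint2
      refine this.congr (Filter.Eventually.of_forall fun x => ?_)
      simp [mul_sub]
    have hdiff : ∫ x in S.Ω, b.lap x * clLap φ x
        = ∫ x in S.Ω, b.lap x * (clLap φ x - clLap ψ x) := by
      have e : (fun x => b.lap x * (clLap φ x - clLap ψ x))
          = fun x => b.lap x * clLap φ x - b.lap x * clLap ψ x := by
        funext x; ring
      rw [e, integral_sub hint1 hint2, hzero, sub_zero]
    rw [hdiff]
    calc |∫ x in S.Ω, b.lap x * (clLap φ x - clLap ψ x)|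
        ≤ ∫ x in S.Ω, ‖b.lap x * (clLap φ x - clLap ψ x)‖ := by
          rw [← Real.norm_eq_abs]
          exact norm_integral_le_integral_norm _
      _ ≤ ∫ x in S.Ω, ‖b.lap x‖ * ε := by
          refine integral_mono hintd.norm (hbl.norm.mul_const ε) ?_
          intro x
          show ‖b.lap x * (clLap φ x - clLap ψ x)‖ ≤ ‖b.lap x‖ * ε
          rw [norm_mul]
          exact mul_le_mul_of_nonneg_left (hptw x) (norm_nonneg _)
      _ = ε * B := by rw [integral_mul_const]; ring
  by_contra hne
  have hIpos : 0 < |∫ x in S.Ω, b.lap x * clLap φ x| := abs_pos.2 hne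
  have h1 := hmain (|∫ x in S.Ω, b.lap x * clLap φ x| / (2 * (B + 1))) (by positivity)
  have hfrac : (|∫ x in S.Ω, b.lap x * clLap φ x| / (2 * (B + 1))) * B
      < |∫ x in S.Ω, b.lap x * clLap φ x| := by
    rw [div_mul_eq_mul_div, div_lt_iff₀ (by positivity)]
    nlinarith
  linarith

end Final



/-- under (B2), for a `Δ`-orthonormal sequence of DBS
eigenfunctions `b_j`, the functions `h_j = Δb_j` are weakly harmonic, belong to
the harmonic Bergman space `L²_H(Ω)`, and form an orthonormal family in `L²(Ω)`. -/
theorem statement_11 {N : ℕ} (hN : 2 ≤ N) (S : B1Setting N) (hB2 : S.B2)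
    (q : ℕ → ℝ) (b : ℕ → H0DFun S.Ω)
    (hDBS : ∀ j, S.IsDBS (q j) (b j))
    (hON : ∀ i j, lapIP (b i) (b j) = if i = j then 1 else 0) :
    (∀ j, MemL2H S.Ω (b j).lap) ∧
    (∀ i j, ∫ x in S.Ω, (b i).lap x * (b j).lap x = if i = j then (1 : ℝ) else 0) := by
  exact ⟨fun j => ⟨(b j).lap_mem, lap_pairing_zero S (hDBS j)⟩, fun i j => hON i j⟩

end
end

section
/- Assume (B2) holds. For finite M ≥ 1 define the rank-M Poisson kernel P_M(x,z) := Σ_{j=1}^M (|∂Ω| q_j)^{-1/2} h_j(x) w_j(z) and the operator E_M g(x) := ∫_{∂Ω} P_M(x,z) g(z) dσ(z). Then for all g ∈ L²(∂Ω, dσ), ‖E_H g − E_M g‖_{L²(Ω)} ≤ √(|∂Ω|/q_{M+1}) · ‖g − g_M‖_{∂Ω}, where g_M := Σ_{j=1}^M ĝ_j w_j with ĝ_j := ⟨g, w_j⟩_{∂Ω} and q_{M+1} is the (M+1)-st DBS eigenvalue. -/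
open MeasureTheory Filter Set Topology
open scoped ENNReal

noncomputable section

variable {N : ℕ}


section Helpers
variable {α : Type*} [MeasurableSpace α] {μ : Measure α}

lemma helper_int_mul {f g : α → ℝ} (hf : MemLp f 2 μ) (hg : MemLp g 2 μ) :
    Integrable (fun x => f x * g x) μ := by
  have h1 := (hf.add hg).integrable_sq
  simp only [Pi.add_apply] at h1
  have h2 := hf.integrable_sq
  have h3 := hg.integrable_sq
  have e : (fun x => f x * g x) = fun x => ((f x + g x) ^ 2 - f x ^ 2 - g x ^ 2) / 2 := by
    funext x; ring
  rw [e]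
  exact ((h1.sub h2).sub h3).div_const 2

lemma helper_sum_sq {u : ℕ → α → ℝ} {A : ℝ} (a : ℕ → ℝ)
    (hu : ∀ j, MemLp (u j) 2 μ)
    (huu : ∀ i j, ∫ x, u i x * u j x ∂μ = if i = j then A else 0) (s : Finset ℕ) :
    ∫ x, (∑ j ∈ s, a j * u j x) ^ 2 ∂μ = A * ∑ j ∈ s, a j ^ 2 := by
  have hp : MemLp (fun x => ∑ j ∈ s, a j * u j x) 2 μ :=
    memLp_finset_sum s fun j _ => (hu j).const_mul (a j)
  have key : ∀ i ∈ s, ∫ x, u i x * (∑ j ∈ s, a j * u j x) ∂μ = A * a i := by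
    intro i hi
    have e : ∀ x, u i x * (∑ j ∈ s, a j * u j x) = ∑ j ∈ s, a j * (u i x * u j x) := by
      intro x; rw [Finset.mul_sum]; exact Finset.sum_congr rfl fun j _ => by ring
    simp_rw [e]
    rw [integral_finset_sum _ fun j _ => (helper_int_mul (hu i) (hu j)).const_mul (a j)]
    have e2 : ∀ j ∈ s, a j * ∫ x, u i x * u j x ∂μ = a j * (if i = j then A else 0) := by
      intro j _; rw [huu]
    calc ∑ j ∈ s, ∫ x, a j * (u i x * u j x) ∂μ
        = ∑ j ∈ s, a j * (if i = j then A else 0) := by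
          refine Finset.sum_congr rfl fun j hj => ?_
          rw [integral_const_mul, huu]
      _ = A * a i := by
          rw [Finset.sum_eq_single i (fun j _ hji => by rw [if_neg fun h => hji h.symm, mul_zero])
            (fun h => absurd hi h), if_pos rfl]; ring
  have e2 : ∀ x, (∑ j ∈ s, a j * u j x) ^ 2
      = ∑ i ∈ s, a i * (u i x * (∑ j ∈ s, a j * u j x)) := by
    intro x; rw [sq, Finset.sum_mul]; exact Finset.sum_congr rfl fun i _ => by ring
  simp_rw [e2]
  rw [integral_finset_sum _ fun i _ => (helper_int_mul (hu i) hp).const_mul (a i)]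
  rw [Finset.mul_sum]
  refine Finset.sum_congr rfl fun i hi => ?_
  rw [integral_const_mul, key i hi]; ring

lemma helper_ortho_expand {g : α → ℝ} {u : ℕ → α → ℝ} {A : ℝ} {a : ℕ → ℝ}
    (hg : MemLp g 2 μ) (hu : ∀ j, MemLp (u j) 2 μ)
    (huu : ∀ i j, ∫ x, u i x * u j x ∂μ = if i = j then A else 0)
    (hgu : ∀ j, ∫ x, g x * u j x ∂μ = A * a j) (s : Finset ℕ) :
    ∫ x, (g x - ∑ j ∈ s, a j * u j x) ^ 2 ∂μ
      = (∫ x, g x * g x ∂μ) - A * ∑ j ∈ s, a j ^ 2 := by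
  have hp : MemLp (fun x => ∑ j ∈ s, a j * u j x) 2 μ :=
    memLp_finset_sum s fun j _ => (hu j).const_mul (a j)
  have hgg := helper_int_mul hg hg
  have hgp := helper_int_mul hg hp
  have hppA := helper_sum_sq a hu huu s
  have hgpA : ∫ x, g x * (∑ j ∈ s, a j * u j x) ∂μ = A * ∑ j ∈ s, a j ^ 2 := by
    have e : ∀ x, g x * (∑ j ∈ s, a j * u j x) = ∑ j ∈ s, a j * (g x * u j x) := by
      intro x; rw [Finset.mul_sum]; exact Finset.sum_congr rfl fun j _ => by ring
    simp_rw [e]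
    rw [integral_finset_sum _ fun j _ => (helper_int_mul hg (hu j)).const_mul (a j)]
    rw [Finset.mul_sum]
    exact Finset.sum_congr rfl fun j _ => by rw [integral_const_mul, hgu]; ring
  have hppInt : Integrable (fun x => (∑ j ∈ s, a j * u j x) ^ 2) μ := hp.integrable_sq
  have e : (fun x => (g x - ∑ j ∈ s, a j * u j x) ^ 2)
      = fun x => (g x * g x - 2 * (g x * (∑ j ∈ s, a j * u j x)))
          + (∑ j ∈ s, a j * u j x) ^ 2 := by funext x; ring
  have h1 : Integrable (fun x => g x * g x - 2 * (g x * ∑ j ∈ s, a j * u j x)) μ :=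
    hgg.sub (hgp.const_mul 2)
  have h2 : Integrable (fun x => 2 * (g x * ∑ j ∈ s, a j * u j x)) μ := hgp.const_mul 2
  rw [e, integral_add h1 hppInt, integral_sub hgg h2, integral_const_mul, hgpA, hppA]
  ring

lemma helper_lintegral_sq (f : α → ℝ) :
    ∫⁻ x, (‖f x‖₊ : ℝ≥0∞) ^ (2 : ℕ) ∂μ = eLpNorm f 2 μ ^ (2 : ℕ) := by
  rw [eLpNorm_eq_lintegral_rpow_enorm_toReal two_ne_zero ENNReal.ofNat_ne_top]
  rw [← ENNReal.rpow_natCast _ 2, ← ENNReal.rpow_mul]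
  norm_num
  simp only [enorm_eq_nnnorm]

lemma helper_sq_ineq (δ u v : ℝ) (hδ : 0 < δ) :
    (u + v) ^ 2 ≤ (1 + δ) * v ^ 2 + (1 + 1/δ) * u ^ 2 := by
  have hd : δ * (1/δ) = 1 := mul_one_div_cancel hδ.ne'
  have key : δ * ((u + v) ^ 2) ≤ δ * ((1 + δ) * v ^ 2 + (1 + 1/δ) * u ^ 2) := by
    nlinarith [sq_nonneg (u - δ * v)]
  exact le_of_mul_le_mul_left key hδ

lemma helper_nnnorm_sq (r : ℝ) : (‖r‖₊ : ℝ≥0∞) ^ (2 : ℕ) = ENNReal.ofReal (r ^ 2) := by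
  rw [← enorm_eq_nnnorm, Real.enorm_eq_ofReal_abs, ← ENNReal.ofReal_pow (abs_nonneg r), sq_abs]

end Helpers

/-- Theorem 7.3: under (B2), the rank-`M` approximation
`E_M g (x) = ∫_∂Ω P_M(x,z) g(z) dσ(z)` of the harmonic extension operator
satisfies `‖E_H g - E_M g‖ ≤ √(|∂Ω|/q_{M+1}) ‖g - g_M‖_{∂Ω}`. -/
theorem statement_17 {N : ℕ} (hN : 2 ≤ N) (S : B1Setting N) (hB2 : S.B2)
    (q : ℕ → ℝ) (b : ℕ → H0DFun S.Ω)
    (hDBS : ∀ j, S.IsDBS (q j) (b j))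
    (hmono : Monotone q)
    (hON : ∀ i j, lapIP (b i) (b j) = if i = j then 1 else 0)
    (hq : ∀ j, q j * S.bM (b j) = 1)
    (halg : ∀ k, ∀ u : H0DFun S.Ω, deltaNormSq u ≤ 1 →
      (∀ j, j < k → lapIP u (b j) = 0) → S.bM u ≤ S.bM (b k))
    (w : ℕ → Euc N → ℝ)
    (hw : ∀ j z, w j z = Real.sqrt (q j * S.area) * S.dnu (b j) z)
    (EH : (Euc N → ℝ) → Euc N → ℝ)
    (hEH : ∀ g : Euc N → ℝ, MemLp g 2 (surf S.Ω) →
      Tendsto (fun M => eLpNorm (fun x => EH g x -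
          Real.sqrt S.area * ∑ j ∈ Finset.range M,
            (((S.area)⁻¹ * ∫ z, g z * w j z ∂(surf S.Ω)) / Real.sqrt (q j))
              * (b j).lap x)
        2 (volΩ S.Ω)) atTop (𝓝 0))
    (g : Euc N → ℝ) (hg : MemLp g 2 (surf S.Ω)) (M : ℕ) :
    Real.sqrt (∫ x in S.Ω, (EH g x -
        ∫ z, (∑ j ∈ Finset.range M,
          (Real.sqrt (S.area * q j))⁻¹ * (b j).lap x * w j z) * g z
          ∂(surf S.Ω)) ^ 2)
      ≤ Real.sqrt (S.area / q M) *
        Real.sqrt ((S.area)⁻¹ * ∫ z, (g z - ∑ j ∈ Finset.range M,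
          ((S.area)⁻¹ * ∫ y, g y * w j y ∂(surf S.Ω)) * w j z) ^ 2 ∂(surf S.Ω)) := by

  classical
  haveI hσfin : IsFiniteMeasure (surf S.Ω) := ⟨S.fin_bdry⟩
  set A := S.area with hAdef
  -- positivity of the surface area
  have hAnn : surf S.Ω ≠ 0 := by
    intro h0
    have h1 := hq 0
    rw [B1Setting.bM, h0, integral_zero_measure, mul_zero] at h1
    exact zero_ne_one h1
  have hApos : 0 < A := by
    have hu : surf S.Ω Set.univ ≠ 0 := fun h => hAnn (Measure.measure_univ_eq_zero.mp h)
    exact ENNReal.toReal_pos hu S.fin_bdry.ne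
  have hqpos : ∀ j, 0 < q j := by
    intro j
    have h1 := hq j
    have h2 : 0 ≤ S.bM (b j) := integral_nonneg fun z => sq_nonneg _
    nlinarith
  -- coefficients
  set c : ℕ → ℝ := fun j => A⁻¹ * ∫ z, g z * w j z ∂(surf S.Ω) with hcdef
  set γ : ℕ → ℝ := fun j => c j * Real.sqrt (A / q j) with hγdef
  set ℓ : ℕ → Euc N → ℝ := fun j => (b j).lap with hℓdef
  -- basic membership facts
  have hMemw : ∀ j, MemLp (w j) 2 (surf S.Ω) := by
    intro j
    have e : w j = fun z => Real.sqrt (q j * A) * S.dnu (b j) z := funext fun z => hw j z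
    rw [e]; exact (S.dnu_mem (b j)).const_mul _
  have hgw_int : ∀ j, Integrable (fun z => g z * w j z) (surf S.Ω) :=
    fun j => helper_int_mul hg (hMemw j)
  have hgwA : ∀ j, ∫ z, g z * w j z ∂(surf S.Ω) = A * c j := by
    intro j
    rw [hcdef]
    field_simp
  -- orthogonality of normal derivatives
  have hdnuOrth : ∀ i j, ∫ z, S.dnu (b i) z * S.dnu (b j) z ∂(surf S.Ω)
      = (if i = j then 1 else 0) / q i := by
    intro i j
    have h1 := (hDBS i).2 (b j)
    have h2 := hON i j
    rw [lapIP] at h2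
    rw [h2] at h1
    rw [eq_div_iff (hqpos i).ne', mul_comm]
    exact h1.symm
  have hwOrth : ∀ i j, ∫ z, w i z * w j z ∂(surf S.Ω) = if i = j then A else 0 := by
    intro i j
    have e : ∀ z, w i z * w j z = (Real.sqrt (q i * A) * Real.sqrt (q j * A)) *
        (S.dnu (b i) z * S.dnu (b j) z) := by
      intro z; rw [hw i z, hw j z]; ring
    simp_rw [e]
    rw [integral_const_mul, hdnuOrth i j]
    by_cases hij : i = j
    · subst hij
      rw [if_pos rfl, if_pos rfl, Real.mul_self_sqrt (mul_nonneg (hqpos i).le hApos.le)]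
      field_simp
      exact div_self (hqpos i).ne'
    · rw [if_neg hij, if_neg hij]
      simp
  -- interior orthonormality
  have hONint : ∀ i j, ∫ x, ℓ i x * ℓ j x ∂(volΩ S.Ω) = if i = j then (1:ℝ) else 0 :=
    fun i j => hON i j
  have hMemℓ : ∀ j, MemLp (ℓ j) 2 (volΩ S.Ω) := fun j => (b j).lap_mem
  -- the boundary Bessel estimate
  set B : ℝ := ∫ z, (g z - ∑ j ∈ Finset.range M, c j * w j z) ^ 2 ∂(surf S.Ω) with hBdef
  have hexp : ∀ K : ℕ, ∫ z, (g z - ∑ j ∈ Finset.range K, c j * w j z) ^ 2 ∂(surf S.Ω)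
      = (∫ z, g z * g z ∂(surf S.Ω)) - A * ∑ j ∈ Finset.range K, c j ^ 2 :=
    fun K => helper_ortho_expand hg hMemw hwOrth hgwA _
  have hB0 : 0 ≤ B := integral_nonneg fun z => sq_nonneg _
  have hBessel : ∀ K : ℕ, A * ∑ j ∈ Finset.range K, c j ^ 2 ≤ ∫ z, g z * g z ∂(surf S.Ω) := by
    intro K
    have h0 : 0 ≤ ∫ z, (g z - ∑ j ∈ Finset.range K, c j * w j z) ^ 2 ∂(surf S.Ω) :=
      integral_nonneg fun z => sq_nonneg _
    rw [hexp K] at h0; linarith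
  have htail : ∀ K : ℕ, M ≤ K →
      A * ∑ j ∈ Finset.range K \ Finset.range M, c j ^ 2 ≤ B := by
    intro K hMK
    have hsub : Finset.range M ⊆ Finset.range K := Finset.range_subset_range.mpr hMK
    have hsd := Finset.sum_sdiff (f := fun j => c j ^ 2) hsub
    have h3 : A * ∑ j ∈ Finset.range K \ Finset.range M, c j ^ 2
        + A * ∑ j ∈ Finset.range M, c j ^ 2 = A * ∑ j ∈ Finset.range K, c j ^ 2 := by
      rw [← mul_add, hsd]
    have h2 := hBessel K
    rw [hBdef, hexp M]
    linarith
  -- squared norm of partial sums of the series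
  have hDsq : ∀ t : Finset ℕ, ∫ x, (∑ j ∈ t, γ j * ℓ j x) ^ 2 ∂(volΩ S.Ω)
      = ∑ j ∈ t, γ j ^ 2 := by
    intro t
    have h := helper_sum_sq (A := (1:ℝ)) γ hMemℓ hONint t
    rw [h, one_mul]
  have hγsq : ∀ j, γ j ^ 2 = c j ^ 2 * (A / q j) := by
    intro j
    rw [hγdef]
    simp only []
    rw [mul_pow, Real.sq_sqrt (div_nonneg hApos.le (hqpos j).le)]
  have hDle : ∀ K : ℕ, M ≤ K →
      ∫ x, (∑ j ∈ Finset.range K \ Finset.range M, γ j * ℓ j x) ^ 2 ∂(volΩ S.Ω)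
        ≤ (A / q M) * (A⁻¹ * B) := by
    intro K hMK
    rw [hDsq]
    have step1 : ∑ j ∈ Finset.range K \ Finset.range M, γ j ^ 2
        ≤ (A / q M) * ∑ j ∈ Finset.range K \ Finset.range M, c j ^ 2 := by
      rw [Finset.mul_sum]
      refine Finset.sum_le_sum fun j hj => ?_
      have hjM : M ≤ j := by
        rcases Finset.mem_sdiff.mp hj with ⟨_, h2⟩
        exact le_of_not_gt fun h => h2 (Finset.mem_range.mpr h)
      have hd : A / q j ≤ A / q M := by
        gcongr
        · exact hqpos M
        · exact hmono hjM
      rw [hγsq j, mul_comm (A / q M)]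
      exact mul_le_mul_of_nonneg_left hd (sq_nonneg _)
    have hSig : ∑ j ∈ Finset.range K \ Finset.range M, c j ^ 2 ≤ A⁻¹ * B := by
      rw [inv_mul_eq_div, le_div_iff₀ hApos, mul_comm]
      exact htail K hMK
    have step2 : (A / q M) * ∑ j ∈ Finset.range K \ Finset.range M, c j ^ 2
        ≤ (A / q M) * (A⁻¹ * B) :=
      mul_le_mul_of_nonneg_left hSig (div_nonneg hApos.le (hqpos M).le)
    linarith
  -- identification of the rank-M operator with the partial sum
  have hcoef : ∀ j, (Real.sqrt (A * q j))⁻¹ * A = Real.sqrt (A / q j) := by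
    intro j
    rw [Real.sqrt_mul hApos.le, Real.sqrt_div hApos.le]
    have h1 : Real.sqrt A ≠ 0 := (Real.sqrt_pos.mpr hApos).ne'
    have h2 : Real.sqrt (q j) ≠ 0 := (Real.sqrt_pos.mpr (hqpos j)).ne'
    have h3 : Real.sqrt A * Real.sqrt A = A := Real.mul_self_sqrt hApos.le
    field_simp
    linear_combination (-1 : ℝ) * h3
  have hEM : ∀ x, ∫ z, (∑ j ∈ Finset.range M,
        (Real.sqrt (A * q j))⁻¹ * (b j).lap x * w j z) * g z ∂(surf S.Ω)
      = ∑ j ∈ Finset.range M, γ j * ℓ j x := by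
    intro x
    have e1 : ∀ z, (∑ j ∈ Finset.range M, (Real.sqrt (A * q j))⁻¹ * (b j).lap x * w j z) * g z
        = ∑ j ∈ Finset.range M, ((Real.sqrt (A * q j))⁻¹ * (b j).lap x) * (g z * w j z) := by
      intro z; rw [Finset.sum_mul]; exact Finset.sum_congr rfl fun j _ => by ring
    simp_rw [e1]
    rw [integral_finset_sum _ fun j _ => (hgw_int j).const_mul _]
    refine Finset.sum_congr rfl fun j _ => ?_
    rw [integral_const_mul, hgwA j, hγdef, hℓdef]
    simp only []
    have hre := hcoef j
    linear_combination (c j * (b j).lap x) * hre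
  -- convergence of the truncated harmonic extensions
  have hfunEq : ∀ K : ℕ, (fun x => EH g x - Real.sqrt A * ∑ j ∈ Finset.range K,
        ((A⁻¹ * ∫ z, g z * w j z ∂(surf S.Ω)) / Real.sqrt (q j)) * (b j).lap x)
      = fun x => EH g x - ∑ j ∈ Finset.range K, γ j * ℓ j x := by
    intro K
    funext x
    congr 1
    rw [Finset.mul_sum]
    refine Finset.sum_congr rfl fun j _ => ?_
    rw [hγdef, hℓdef]
    simp only []
    rw [hcdef]
    simp only []
    rw [Real.sqrt_div hApos.le]
    ring
  have hEHconv : Tendsto (fun K => eLpNorm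
      (fun x => EH g x - ∑ j ∈ Finset.range K, γ j * ℓ j x) 2 (volΩ S.Ω)) atTop (𝓝 0) := by
    have h := hEH g hg
    simp_rw [hfunEq] at h
    exact h
  -- the main lintegral estimate
  set X : ℝ≥0∞ := ∫⁻ x, (‖EH g x - ∑ j ∈ Finset.range M, γ j * ℓ j x‖₊ : ℝ≥0∞) ^ (2:ℕ)
      ∂(volΩ S.Ω) with hXdef
  set Y : ℝ≥0∞ := ENNReal.ofReal ((A / q M) * (A⁻¹ * B)) with hYdef
  have hstepA : ∀ δ : ℝ, 0 < δ → ∀ K : ℕ, M ≤ K →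
      X ≤ ENNReal.ofReal (1 + δ) * Y + ENNReal.ofReal (1 + 1/δ) *
        (eLpNorm (fun x => EH g x - ∑ j ∈ Finset.range K, γ j * ℓ j x) 2 (volΩ S.Ω)) ^ (2:ℕ) := by
    intro δ hδ K hMK
    have hDm : MemLp (fun x => ∑ j ∈ Finset.range K \ Finset.range M, γ j * ℓ j x) 2
        (volΩ S.Ω) := memLp_finset_sum _ fun j _ => (hMemℓ j).const_mul (γ j)
    have hsplit : ∀ x : Euc N, EH g x - ∑ j ∈ Finset.range M, γ j * ℓ j x
        = (EH g x - ∑ j ∈ Finset.range K, γ j * ℓ j x)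
          + ∑ j ∈ Finset.range K \ Finset.range M, γ j * ℓ j x := by
      intro x
      have hsd := Finset.sum_sdiff (f := fun j => γ j * ℓ j x) (Finset.range_subset_range.mpr hMK)
      linarith
    have hptwise : ∀ x : Euc N,
        (‖EH g x - ∑ j ∈ Finset.range M, γ j * ℓ j x‖₊ : ℝ≥0∞) ^ (2:ℕ)
        ≤ ENNReal.ofReal ((1 + δ) * (∑ j ∈ Finset.range K \ Finset.range M, γ j * ℓ j x) ^ 2)
          + ENNReal.ofReal ((1 + 1/δ) *
              (EH g x - ∑ j ∈ Finset.range K, γ j * ℓ j x) ^ 2) := by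
      intro x
      rw [helper_nnnorm_sq]
      have hreal : (EH g x - ∑ j ∈ Finset.range M, γ j * ℓ j x) ^ 2
          ≤ (1 + δ) * (∑ j ∈ Finset.range K \ Finset.range M, γ j * ℓ j x) ^ 2
            + (1 + 1/δ) * (EH g x - ∑ j ∈ Finset.range K, γ j * ℓ j x) ^ 2 := by
        rw [hsplit x]
        exact helper_sq_ineq δ _ _ hδ
      calc ENNReal.ofReal ((EH g x - ∑ j ∈ Finset.range M, γ j * ℓ j x) ^ 2)
          ≤ ENNReal.ofReal ((1 + δ) * (∑ j ∈ Finset.range K \ Finset.range M, γ j * ℓ j x) ^ 2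
            + (1 + 1/δ) * (EH g x - ∑ j ∈ Finset.range K, γ j * ℓ j x) ^ 2) :=
            ENNReal.ofReal_le_ofReal hreal
        _ ≤ _ := ENNReal.ofReal_add_le
    have hlint : X ≤ ∫⁻ x,
        (ENNReal.ofReal ((1 + δ) * (∑ j ∈ Finset.range K \ Finset.range M, γ j * ℓ j x) ^ 2)
          + ENNReal.ofReal ((1 + 1/δ) *
              (EH g x - ∑ j ∈ Finset.range K, γ j * ℓ j x) ^ 2)) ∂(volΩ S.Ω) := by
      rw [hXdef]
      exact lintegral_mono hptwise
    have haem : AEMeasurable (fun x => ENNReal.ofReal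
        ((1 + δ) * (∑ j ∈ Finset.range K \ Finset.range M, γ j * ℓ j x) ^ 2)) (volΩ S.Ω) :=
      ENNReal.measurable_ofReal.comp_aemeasurable
        ((hDm.integrable_sq.const_mul (1 + δ)).aemeasurable)
    rw [lintegral_add_left' haem] at hlint
    have h1 : ∫⁻ x, ENNReal.ofReal
        ((1 + δ) * (∑ j ∈ Finset.range K \ Finset.range M, γ j * ℓ j x) ^ 2) ∂(volΩ S.Ω)
        ≤ ENNReal.ofReal (1 + δ) * Y := by
      have e : ∀ x : Euc N, ENNReal.ofReal
          ((1 + δ) * (∑ j ∈ Finset.range K \ Finset.range M, γ j * ℓ j x) ^ 2)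
          = ENNReal.ofReal (1 + δ) * ENNReal.ofReal
            ((∑ j ∈ Finset.range K \ Finset.range M, γ j * ℓ j x) ^ 2) := by
        intro x
        rw [ENNReal.ofReal_mul (by positivity)]
      simp_rw [e]
      rw [lintegral_const_mul' _ _ ENNReal.ofReal_ne_top]
      have h2 : ∫⁻ x, ENNReal.ofReal
          ((∑ j ∈ Finset.range K \ Finset.range M, γ j * ℓ j x) ^ 2) ∂(volΩ S.Ω)
          = ENNReal.ofReal (∫ x, (∑ j ∈ Finset.range K \ Finset.range M, γ j * ℓ j x) ^ 2
            ∂(volΩ S.Ω)) :=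
        (ofReal_integral_eq_lintegral_ofReal hDm.integrable_sq
          (Eventually.of_forall fun x => sq_nonneg _)).symm
      rw [h2, hYdef]
      exact mul_le_mul_right (ENNReal.ofReal_le_ofReal (hDle K hMK)) _
    have h3 : ∫⁻ x, ENNReal.ofReal
        ((1 + 1/δ) * (EH g x - ∑ j ∈ Finset.range K, γ j * ℓ j x) ^ 2) ∂(volΩ S.Ω)
        = ENNReal.ofReal (1 + 1/δ) *
          (eLpNorm (fun x => EH g x - ∑ j ∈ Finset.range K, γ j * ℓ j x) 2 (volΩ S.Ω)) ^ (2:ℕ) := by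
      have e : ∀ x : Euc N, ENNReal.ofReal
          ((1 + 1/δ) * (EH g x - ∑ j ∈ Finset.range K, γ j * ℓ j x) ^ 2)
          = ENNReal.ofReal (1 + 1/δ) *
            (‖EH g x - ∑ j ∈ Finset.range K, γ j * ℓ j x‖₊ : ℝ≥0∞) ^ (2:ℕ) := by
        intro x
        rw [helper_nnnorm_sq, ENNReal.ofReal_mul (by positivity)]
      simp_rw [e]
      rw [lintegral_const_mul' _ _ ENNReal.ofReal_ne_top, helper_lintegral_sq]
    calc X ≤ _ := hlint
      _ ≤ ENNReal.ofReal (1 + δ) * Y + ENNReal.ofReal (1 + 1/δ) *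
          (eLpNorm (fun x => EH g x - ∑ j ∈ Finset.range K, γ j * ℓ j x) 2 (volΩ S.Ω)) ^ (2:ℕ) := by
        rw [h3]
        exact add_le_add_left h1 _
  have hXY : ∀ δ : ℝ, 0 < δ → X ≤ ENNReal.ofReal (1 + δ) * Y := by
    intro δ hδ
    have hsq : Tendsto (fun K => (eLpNorm
        (fun x => EH g x - ∑ j ∈ Finset.range K, γ j * ℓ j x) 2 (volΩ S.Ω)) ^ (2:ℕ))
        atTop (𝓝 0) := by
      have := ENNReal.Tendsto.pow (n := 2) hEHconv
      simpa using this
    have hmul : Tendsto (fun K => ENNReal.ofReal (1 + 1/δ) * (eLpNorm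
        (fun x => EH g x - ∑ j ∈ Finset.range K, γ j * ℓ j x) 2 (volΩ S.Ω)) ^ (2:ℕ))
        atTop (𝓝 0) := by
      have h := ENNReal.Tendsto.const_mul (a := ENNReal.ofReal (1 + 1/δ)) hsq
        (Or.inr ENNReal.ofReal_ne_top)
      simpa using h
    have htt : Tendsto (fun K => ENNReal.ofReal (1 + δ) * Y + ENNReal.ofReal (1 + 1/δ) *
        (eLpNorm (fun x => EH g x - ∑ j ∈ Finset.range K, γ j * ℓ j x) 2 (volΩ S.Ω)) ^ (2:ℕ))
        atTop (𝓝 (ENNReal.ofReal (1 + δ) * Y)) := by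
      have h := hmul.const_add (ENNReal.ofReal (1 + δ) * Y)
      simpa using h
    refine ge_of_tendsto htt ?_
    filter_upwards [eventually_ge_atTop M] with K hK using hstepA δ hδ K hK
  have hXY2 : X ≤ Y := by
    have hr : Tendsto (fun n : ℕ => 1 + 1/((n:ℝ)+1)) atTop (𝓝 1) := by
      have h0 : Tendsto (fun n : ℕ => 1/((n:ℝ)+1)) atTop (𝓝 0) :=
        tendsto_one_div_add_atTop_nhds_zero_nat
      have := h0.const_add (1:ℝ)
      simpa using this
    have ht : Tendsto (fun n : ℕ => ENNReal.ofReal (1 + 1/((n:ℝ)+1)) * Y) atTop (𝓝 Y) := by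
      have h := ENNReal.Tendsto.mul_const (b := Y) (ENNReal.tendsto_ofReal hr)
        (Or.inl (by simp : ENNReal.ofReal 1 ≠ 0))
      simpa using h
    refine ge_of_tendsto ht (Eventually.of_forall fun n => hXY (1/((n:ℝ)+1)) (by positivity))
  -- conclusion
  have hnn : 0 ≤ (A / q M) * (A⁻¹ * B) :=
    mul_nonneg (div_nonneg hApos.le (hqpos M).le) (mul_nonneg (inv_nonneg.mpr hApos.le) hB0)
  have main : Real.sqrt (∫ x, (EH g x - ∑ j ∈ Finset.range M, γ j * ℓ j x) ^ 2 ∂(volΩ S.Ω))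
      ≤ Real.sqrt (A / q M) * Real.sqrt (A⁻¹ * B) := by
    rw [← Real.sqrt_mul (div_nonneg hApos.le (hqpos M).le)]
    refine Real.sqrt_le_sqrt ?_
    by_cases hint : Integrable
        (fun x => (EH g x - ∑ j ∈ Finset.range M, γ j * ℓ j x) ^ 2) (volΩ S.Ω)
    · have hXeq : X = ∫⁻ x, ENNReal.ofReal
          ((EH g x - ∑ j ∈ Finset.range M, γ j * ℓ j x) ^ 2) ∂(volΩ S.Ω) := by
        rw [hXdef]
        congr 1
        funext x
        rw [helper_nnnorm_sq]
      have h1 : ∫ x, (EH g x - ∑ j ∈ Finset.range M, γ j * ℓ j x) ^ 2 ∂(volΩ S.Ω)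
          = X.toReal := by
        rw [integral_eq_lintegral_of_nonneg_ae (Eventually.of_forall fun x => sq_nonneg _)
          hint.aestronglyMeasurable, hXeq]
      rw [h1]
      calc X.toReal ≤ Y.toReal :=
            ENNReal.toReal_mono (by rw [hYdef]; exact ENNReal.ofReal_ne_top) hXY2
        _ = (A / q M) * (A⁻¹ * B) := by rw [hYdef, ENNReal.toReal_ofReal hnn]
    · rw [integral_undef hint]
      exact hnn
  -- rewrite the goal into the established form
  have hgoal : Real.sqrt (∫ x in S.Ω, (EH g x - ∫ z, (∑ j ∈ Finset.range M,
        (Real.sqrt (A * q j))⁻¹ * (b j).lap x * w j z) * g z ∂(surf S.Ω)) ^ 2)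
      ≤ Real.sqrt (A / q M) * Real.sqrt (A⁻¹ * B) := by
    have e : ∀ x : Euc N, EH g x - ∫ z, (∑ j ∈ Finset.range M,
        (Real.sqrt (A * q j))⁻¹ * (b j).lap x * w j z) * g z ∂(surf S.Ω)
        = EH g x - ∑ j ∈ Finset.range M, γ j * ℓ j x := by
      intro x; rw [hEM x]
    simp_rw [e]
    exact main
  exact hgoal


end
end
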